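/- arXiv:1502.01139 — 9 statements merged into one kernel-verified Lean document; each statement's English description precedes it below -/
import Mathlib

section
/- Let M = A + W − σ·v·vᵀ be a generalized modularity matrix. Then m_G = λ₁(M) satisfies the strict inequality m_G < λ₁(A+W). -/
open Matrix BigOperators

/-- A nonnegative square matrix is irreducible if for every pair of indices `(i, j)`
there is a positive power `k` with `(A ^ k) i j > 0`. -/
def Matrix.Irreducible {n : ℕ} (A : Matrix (Fin n) (Fin n) ℝ) : Prop :=
  ∀ i j, ∃ k : ℕ, 0 < k ∧ 0 < (A ^ k) i j

/-- The largest eigenvalue `λ₁(X)` of a real symmetric (Hermitian) matrix. -/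
noncomputable def lam1 {n : ℕ} (X : Matrix (Fin n) (Fin n) ℝ) (hX : X.IsHermitian) : ℝ :=
  ⨆ i, hX.eigenvalues i

open RealInnerProductSpace

section
variable {n : ℕ} {X : Matrix (Fin n) (Fin n) ℝ} (hX : X.IsHermitian)

lemma inner_eq_dot (u w : EuclideanSpace ℝ (Fin n)) : ⟪u, w⟫ = (u : Fin n → ℝ) ⬝ᵥ w := by
  simp [PiLp.inner_apply, dotProduct, mul_comm]

lemma dot_self_expand (x : EuclideanSpace ℝ (Fin n)) :
    (x : Fin n → ℝ) ⬝ᵥ (x : Fin n → ℝ) = ∑ i, (⟪hX.eigenvectorBasis i, x⟫)^2 := by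
  have h := (hX.eigenvectorBasis).sum_inner_mul_inner x x
  rw [inner_eq_dot] at h
  rw [← h]
  refine Finset.sum_congr rfl fun i _ => ?_
  rw [real_inner_comm x]; ring

lemma inner_basis_mulVec (x : EuclideanSpace ℝ (Fin n)) (i : Fin n) :
    ⟪hX.eigenvectorBasis i, (WithLp.toLp 2 (X *ᵥ (x : Fin n → ℝ)) : EuclideanSpace ℝ (Fin n))⟫
      = hX.eigenvalues i * ⟪hX.eigenvectorBasis i, x⟫ := by
  have hsym : Xᵀ = X := by
    have := hX.eq; rwa [conjTranspose_eq_transpose_of_trivial] at this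
  set bf : Fin n → (Fin n → ℝ) := fun j => hX.eigenvectorBasis j with hbf
  have heig : X *ᵥ bf i = hX.eigenvalues i • bf i := hX.mulVec_eigenvectorBasis i
  rw [inner_eq_dot, inner_eq_dot]
  show bf i ⬝ᵥ (X *ᵥ (x : Fin n → ℝ)) = hX.eigenvalues i * (bf i ⬝ᵥ (x : Fin n → ℝ))
  rw [dotProduct_mulVec, ← mulVec_transpose, hsym, heig, smul_dotProduct]
  rfl

lemma dot_mulVec_expand (x : EuclideanSpace ℝ (Fin n)) :
    (x : Fin n → ℝ) ⬝ᵥ (X *ᵥ (x : Fin n → ℝ))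
      = ∑ i, hX.eigenvalues i * (⟪hX.eigenvectorBasis i, x⟫)^2 := by
  have h := (hX.eigenvectorBasis).sum_inner_mul_inner x (WithLp.toLp 2 (X *ᵥ (x : Fin n → ℝ)) : EuclideanSpace ℝ (Fin n))
  rw [inner_eq_dot, WithLp.ofLp_toLp] at h
  rw [← h]
  refine Finset.sum_congr rfl fun i _ => ?_
  rw [inner_basis_mulVec, real_inner_comm x]; ring

lemma lam1_attained (hn : 0 < n) :
    ∃ i₀, lam1 X hX = hX.eigenvalues i₀ ∧ ∀ j, hX.eigenvalues j ≤ hX.eigenvalues i₀ := by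
  haveI : Nonempty (Fin n) := ⟨⟨0, hn⟩⟩
  obtain ⟨i₀, hmax⟩ := Finite.exists_max hX.eigenvalues
  exact ⟨i₀, le_antisymm (ciSup_le hmax) (le_ciSup (Set.Finite.bddAbove (Set.finite_range _)) i₀), hmax⟩

lemma eigenvalue_le_lam1 (hn : 0 < n) (i : Fin n) : hX.eigenvalues i ≤ lam1 X hX := by
  haveI : Nonempty (Fin n) := ⟨⟨0, hn⟩⟩
  exact le_ciSup (Set.Finite.bddAbove (Set.finite_range _)) i

lemma rayleigh_le (hn : 0 < n) (x : Fin n → ℝ) :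
    x ⬝ᵥ (X *ᵥ x) ≤ lam1 X hX * (x ⬝ᵥ x) := by
  rw [dot_mulVec_expand hX (WithLp.toLp 2 x),
    dot_self_expand hX (WithLp.toLp 2 x), Finset.mul_sum]
  exact Finset.sum_le_sum fun i _ => mul_le_mul_of_nonneg_right
    (eigenvalue_le_lam1 hX hn i) (sq_nonneg _)

lemma eigen_of_rayleigh_eq (hn : 0 < n) (x : Fin n → ℝ)
    (heq : x ⬝ᵥ (X *ᵥ x) = lam1 X hX * (x ⬝ᵥ x)) :
    X *ᵥ x = lam1 X hX • x := by
  set bf : Fin n → (Fin n → ℝ) := fun j => hX.eigenvectorBasis j with hbf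
  set c : Fin n → ℝ := fun i => ⟪hX.eigenvectorBasis i, (WithLp.toLp 2 x : EuclideanSpace ℝ (Fin n))⟫ with hc
  have hzero : ∀ i ∈ Finset.univ, (lam1 X hX - hX.eigenvalues i) * (c i)^2 = 0 := by
    rw [← Finset.sum_eq_zero_iff_of_nonneg (fun i _ =>
      mul_nonneg (sub_nonneg.2 (eigenvalue_le_lam1 hX hn i)) (sq_nonneg _))]
    have h1 := dot_mulVec_expand hX (WithLp.toLp 2 x)
    have h2 := dot_self_expand hX (WithLp.toLp 2 x)
    simp only [sub_mul, Finset.sum_sub_distrib]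
    rw [← h1, ← Finset.mul_sum, ← h2, heq, sub_self]
  have heig : ∀ i, X *ᵥ bf i = hX.eigenvalues i • bf i := fun i => hX.mulVec_eigenvectorBasis i
  have hx : x = ∑ i, c i • bf i := by
    have := congrArg WithLp.ofLp ((hX.eigenvectorBasis).sum_repr' (WithLp.toLp 2 x))
    rw [WithLp.ofLp_sum] at this
    exact this.symm
  have hXx : X *ᵥ x = ∑ i, c i • (hX.eigenvalues i • bf i) := by
    rw [hx, ← X.mulVecLin_apply, map_sum]
    refine Finset.sum_congr rfl fun i _ => ?_
    rw [_root_.map_smul, X.mulVecLin_apply, heig i]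
  rw [hXx, hx, Finset.smul_sum]
  refine Finset.sum_congr rfl fun i _ => ?_
  have := hzero i (Finset.mem_univ i)
  rcases mul_eq_zero.1 this with h | h
  · rw [smul_smul, show hX.eigenvalues i = lam1 X hX by linarith, mul_comm, smul_smul]
  · rw [sq_eq_zero_iff.1 h]
    simp

end

section
variable {n : ℕ}

lemma pow_entry_nonneg {B : Matrix (Fin n) (Fin n) ℝ} (hB : ∀ i j, 0 ≤ B i j) (k : ℕ) :
    ∀ i j, 0 ≤ (B ^ k) i j := by
  induction k with
  | zero => intro i j; by_cases h : i = j <;> simp [pow_zero, Matrix.one_apply, h]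
  | succ k ih =>
    intro i j
    rw [pow_succ, Matrix.mul_apply]
    exact Finset.sum_nonneg fun l _ => mul_nonneg (ih i l) (hB l j)

lemma pow_entry_mono {A B : Matrix (Fin n) (Fin n) ℝ} (hA : ∀ i j, 0 ≤ A i j)
    (hAB : ∀ i j, A i j ≤ B i j) (k : ℕ) : ∀ i j, (A ^ k) i j ≤ (B ^ k) i j := by
  induction k with
  | zero => intro i j; simp [pow_zero]
  | succ k ih =>
    intro i j
    rw [pow_succ, pow_succ, Matrix.mul_apply, Matrix.mul_apply]
    refine Finset.sum_le_sum fun l _ => mul_le_mul (ih i l) (hAB l j) (hA l j)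
      (le_trans (pow_entry_nonneg hA k i l) (ih i l))

lemma pow_mulVec_eigen {B : Matrix (Fin n) (Fin n) ℝ} {y : Fin n → ℝ} {ν : ℝ}
    (h : B *ᵥ y = ν • y) (k : ℕ) : (B ^ k) *ᵥ y = (ν ^ k) • y := by
  induction k with
  | zero => simp
  | succ k ih =>
    rw [pow_succ', ← Matrix.mulVec_mulVec, ih, Matrix.mulVec_smul, h, smul_smul, ← pow_succ]

lemma perron_pos {A B : Matrix (Fin n) (Fin n) ℝ} (hApos : ∀ i j, 0 ≤ A i j)
    (hAirr : ∀ i j, ∃ k : ℕ, 0 < k ∧ 0 < (A ^ k) i j)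
    (hAB : ∀ i j, A i j ≤ B i j) {y : Fin n → ℝ} (hy : y ≠ 0) (hynn : ∀ i, 0 ≤ y i)
    {ν : ℝ} (heig : B *ᵥ y = ν • y) : ∀ i, 0 < y i := by
  intro i
  rcases lt_or_eq_of_le (hynn i) with h | h
  · exact h
  exfalso
  obtain ⟨j, hj⟩ : ∃ j, 0 < y j := by
    by_contra hc
    push_neg at hc
    exact hy (funext fun j => le_antisymm (hc j) (hynn j))
  obtain ⟨k, hk, hAk⟩ := hAirr i j
  have hBk : 0 < (B ^ k) i j := lt_of_lt_of_le hAk (pow_entry_mono hApos hAB k i j)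
  have h1 : ((B ^ k) *ᵥ y) i = 0 := by
    rw [pow_mulVec_eigen heig k]
    simp [← h]
  have h2 : 0 < ((B ^ k) *ᵥ y) i := by
    rw [Matrix.mulVec, dotProduct]
    refine Finset.sum_pos' (fun l _ => mul_nonneg
      (le_trans (pow_entry_nonneg hApos k i l) (pow_entry_mono hApos hAB k i l)) (hynn l))
      ⟨j, Finset.mem_univ j, mul_pos hBk hj⟩
  exact absurd h1 (ne_of_gt h2)
end

section Main
variable {n : ℕ}

lemma vecMulVec_mulVec' (v x : Fin n → ℝ) : vecMulVec v v *ᵥ x = (v ⬝ᵥ x) • v := by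
  ext i
  simp [vecMulVec_apply, mulVec, dotProduct, Finset.mul_sum, Pi.smul_apply, smul_eq_mul,
    mul_comm, mul_left_comm]
end Main


theorem stmt1 {n : ℕ} (hn : 0 < n) (A W M : Matrix (Fin n) (Fin n) ℝ)
    (hA : A.IsHermitian) (hApos : ∀ i j, 0 ≤ A i j) (hAirr : A.Irreducible)
    (hW : W.IsDiag) (v : Fin n → ℝ) (hv : v ≠ 0) (hvpos : ∀ i, 0 ≤ v i)
    (σ : ℝ) (hσ : 0 < σ)
    (hMdef : M = A + W - σ • vecMulVec v v)
    (hM : M.IsHermitian) (hAW : (A + W).IsHermitian) :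
    lam1 M hM < lam1 (A + W) hAW := by
  set μ := lam1 (A + W) hAW with hμ
  -- quadratic form identity
  have hquad : ∀ y : Fin n → ℝ, y ⬝ᵥ (M *ᵥ y) = y ⬝ᵥ ((A + W) *ᵥ y) - σ * (v ⬝ᵥ y)^2 := by
    intro y
    rw [hMdef, sub_mulVec, dotProduct_sub, smul_mulVec, vecMulVec_mulVec',
      dotProduct_smul, dotProduct_smul, smul_eq_mul, smul_eq_mul, dotProduct_comm y v]
    ring
  -- top eigenvector of M
  obtain ⟨i₀, hi₀, -⟩ := lam1_attained hM hn
  set x : Fin n → ℝ := (hM.eigenvectorBasis i₀ : Fin n → ℝ) with hxdef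
  have hxunit : x ⬝ᵥ x = 1 := by
    have h1 : ‖hM.eigenvectorBasis i₀‖ = 1 := hM.eigenvectorBasis.orthonormal.1 i₀
    have h2 : ⟪hM.eigenvectorBasis i₀, hM.eigenvectorBasis i₀⟫ = 1 := by
      rw [real_inner_self_eq_norm_sq, h1]; norm_num
    rw [inner_eq_dot] at h2
    exact h2
  have hMx : M *ᵥ x = lam1 M hM • x := by
    rw [hi₀]; exact hM.mulVec_eigenvectorBasis i₀
  have hxMx : x ⬝ᵥ (M *ᵥ x) = lam1 M hM := by
    rw [hMx, dotProduct_smul, smul_eq_mul, hxunit, mul_one]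
  have hxAW_le : x ⬝ᵥ ((A + W) *ᵥ x) ≤ μ := by
    have := rayleigh_le hAW hn x
    rwa [hxunit, mul_one] at this
  have hle : lam1 M hM ≤ μ := by
    have := hquad x
    rw [hxMx] at this
    nlinarith [sq_nonneg (v ⬝ᵥ x)]
  rcases lt_or_eq_of_le hle with h | heq
  · exact h
  exfalso
  -- equality case
  have hσvx : σ * (v ⬝ᵥ x)^2 = x ⬝ᵥ ((A + W) *ᵥ x) - μ := by
    have := hquad x
    rw [hxMx, heq] at this
    linarith
  have hvx : v ⬝ᵥ x = 0 := by
    have h1 : σ * (v ⬝ᵥ x)^2 ≤ 0 := by rw [hσvx]; linarith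
    have hs : (v ⬝ᵥ x)^2 ≤ 0 := by
      by_contra h
      push_neg at h
      exact absurd h1 (not_le.2 (mul_pos hσ h))
    exact sq_eq_zero_iff.1 (le_antisymm hs (sq_nonneg _))
  have hxAW : x ⬝ᵥ ((A + W) *ᵥ x) = μ := by
    have := hσvx
    rw [hvx] at this
    simp at this
    linarith
  -- |x|
  set y : Fin n → ℝ := fun i => |x i| with hydef
  have hynn : ∀ i, 0 ≤ y i := fun i => abs_nonneg _
  have hyunit : y ⬝ᵥ y = 1 := by
    rw [← hxunit]
    exact Finset.sum_congr rfl fun i _ => by simp [hydef, abs_mul_abs_self]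
  have hy0 : y ≠ 0 := by
    intro h
    rw [h] at hyunit
    simp [dotProduct] at hyunit
  have hx_le_y : x ⬝ᵥ ((A + W) *ᵥ x) ≤ y ⬝ᵥ ((A + W) *ᵥ y) := by
    simp only [dotProduct, mulVec, Finset.mul_sum]
    refine Finset.sum_le_sum fun i _ => Finset.sum_le_sum fun j _ => ?_
    rcases eq_or_ne i j with rfl | hij
    · have : y i * ((A + W) i i * y i) = (A + W) i i * (y i * y i) := by ring
      rw [this, hydef]
      simp only [abs_mul_abs_self]
      ring_nf
      exact le_of_eq (by ring)
    · have hC : 0 ≤ (A + W) i j := by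
        rw [Matrix.add_apply, hW hij, add_zero]; exact hApos i j
      have h1 : x i * ((A + W) i j * x j) = (A + W) i j * (x i * x j) := by ring
      have h2 : y i * ((A + W) i j * y j) = (A + W) i j * (|x i| * |x j|) := by
        rw [hydef]; ring
      rw [h1, h2]
      refine mul_le_mul_of_nonneg_left ?_ hC
      calc x i * x j ≤ |x i * x j| := le_abs_self _
        _ = |x i| * |x j| := abs_mul _ _
  have hyAW : y ⬝ᵥ ((A + W) *ᵥ y) = μ * (y ⬝ᵥ y) := by
    have hub := rayleigh_le hAW hn y
    rw [hyunit, mul_one] at hub ⊢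
    linarith [hx_le_y, hxAW.symm.le]
  have hyeig : (A + W) *ᵥ y = μ • y := eigen_of_rayleigh_eq hAW hn y hyAW
  have hxeig : (A + W) *ᵥ x = μ • x := by
    refine eigen_of_rayleigh_eq hAW hn x ?_
    rw [hxunit, mul_one, hxAW]
  -- Perron setup
  set c : ℝ := ∑ j, |W j j| with hcdef
  set B : Matrix (Fin n) (Fin n) ℝ := A + W + c • (1 : Matrix (Fin n) (Fin n) ℝ) with hBdef
  have hcW : ∀ i, 0 ≤ W i i + c := by
    intro i
    have h1 : |W i i| ≤ c := Finset.single_le_sum (f := fun j => |W j j|)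
      (fun j _ => abs_nonneg _) (Finset.mem_univ i)
    have := neg_abs_le (W i i)
    linarith
  have hAB : ∀ i j, A i j ≤ B i j := by
    intro i j
    rcases eq_or_ne i j with rfl | hij
    · simp only [hBdef, Matrix.add_apply, Matrix.smul_apply, Matrix.one_apply_eq,
        smul_eq_mul, mul_one]
      linarith [hcW i]
    · simp only [hBdef, Matrix.add_apply, Matrix.smul_apply, Matrix.one_apply_ne hij,
        smul_eq_mul, mul_zero, add_zero, hW hij]
      exact le_rfl
  have hBeig : ∀ w : Fin n → ℝ, (A + W) *ᵥ w = μ • w → B *ᵥ w = (μ + c) • w := by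
    intro w hw
    rw [hBdef, add_mulVec, hw, smul_mulVec, one_mulVec, add_smul]
  have hypos : ∀ i, 0 < y i := perron_pos hApos hAirr hAB hy0 hynn (hBeig y hyeig)
  have hxne : ∀ i, x i ≠ 0 := fun i h => by
    have := hypos i
    rw [hydef] at this
    simp [h] at this
  obtain ⟨i₁, hi₁⟩ : ∃ i, 0 < v i := by
    by_contra hc2
    push_neg at hc2
    exact hv (funext fun i => le_antisymm (hc2 i) (hvpos i))
  set z : Fin n → ℝ := y - x with hzdef
  have hznn : ∀ i, 0 ≤ z i := fun i => by
    simp only [hzdef, Pi.sub_apply, hydef, sub_nonneg]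
    exact le_abs_self _
  rcases eq_or_ne z 0 with hz | hz
  · -- x = y > 0 entrywise, contradiction with v ⬝ᵥ x = 0
    have hxy : x = y := by
      have := sub_eq_zero.mp hz
      exact this.symm
    have hxpos : ∀ i, 0 < x i := fun i => by rw [hxy]; exact hypos i
    have : 0 < v ⬝ᵥ x :=
      Finset.sum_pos' (fun i _ => mul_nonneg (hvpos i) (hxpos i).le)
        ⟨i₁, Finset.mem_univ i₁, mul_pos hi₁ (hxpos i₁)⟩
    rw [hvx] at this
    exact lt_irrefl 0 this
  · -- z > 0 entrywise forces x < 0 entrywise, contradiction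
    have hzeig : (A + W) *ᵥ z = μ • z := by
      rw [hzdef, mulVec_sub, hyeig, hxeig, smul_sub]
    have hzpos : ∀ i, 0 < z i := perron_pos hApos hAirr hAB hz hznn (hBeig z hzeig)
    have hxneg : ∀ i, x i < 0 := by
      intro i
      by_contra h
      push_neg at h
      have : y i = x i := abs_of_nonneg h
      have := hzpos i
      simp only [hzdef, Pi.sub_apply] at this
      linarith
    have h1 : 0 < ∑ i, v i * (-x i) :=
      Finset.sum_pos' (fun i _ => mul_nonneg (hvpos i) (neg_nonneg.2 (hxneg i).le))
        ⟨i₁, Finset.mem_univ i₁, mul_pos hi₁ (neg_pos.2 (hxneg i₁))⟩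
    have h2 : v ⬝ᵥ x = -∑ i, v i * (-x i) := by
      rw [dotProduct, ← Finset.sum_neg_distrib]
      exact Finset.sum_congr rfl fun i _ => by ring
    rw [hvx] at h2
    linarith
end

section
/- Let M = A + W − σ·v·vᵀ be a generalized modularity matrix, and let x ∈ ℝⁿ be a nonzero vector with M x = m_G x and vᵀx ≥ 0. Then the set S = { i : xᵢ ≥ 0 } is nonempty and induces a connected subgraph. -/
open Matrix BigOperators

/-- The subgraph induced on `S` by the weighted adjacency matrix `A`: distinct vertices
`i, j ∈ S` are adjacent whenever the corresponding weight is positive. -/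
def inducedSubgraph {n : ℕ} (A : Matrix (Fin n) (Fin n) ℝ) (S : Set (Fin n)) :
    SimpleGraph S :=
  SimpleGraph.fromRel (fun i j => 0 < A i.val j.val)

section Aux

variable {n : ℕ}

private lemma sum_smul_dot (c : Fin n → ℝ) (B : Fin n → (Fin n → ℝ)) (w : Fin n → ℝ) :
    (∑ i, c i • B i) ⬝ᵥ w = ∑ i, c i * (B i ⬝ᵥ w) := by
  simp only [dotProduct, Finset.sum_apply, Pi.smul_apply, smul_eq_mul, Finset.sum_mul,
    Finset.mul_sum, mul_assoc]
  exact Finset.sum_comm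

private lemma dot_sum_smul (c : Fin n → ℝ) (B : Fin n → (Fin n → ℝ)) (w : Fin n → ℝ) :
    w ⬝ᵥ (∑ i, c i • B i) = ∑ i, c i * (w ⬝ᵥ B i) := by
  simp only [dotProduct, Finset.sum_apply, Pi.smul_apply, smul_eq_mul, Finset.mul_sum]
  rw [Finset.sum_comm]
  refine Finset.sum_congr rfl fun i _ => Finset.sum_congr rfl fun k _ => by ring

private lemma dot_expand {B : Fin n → (Fin n → ℝ)}
    (horth : ∀ i j, B i ⬝ᵥ B j = if i = j then (1:ℝ) else 0)
    (c d : Fin n → ℝ) :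
    (∑ i, c i • B i) ⬝ᵥ (∑ j, d j • B j) = ∑ i, c i * d i := by
  rw [sum_smul_dot]
  refine Finset.sum_congr rfl fun i _ => ?_
  rw [dot_sum_smul]
  simp only [horth, mul_ite, mul_one, mul_zero]
  simp

private lemma rayleigh (hn : 0 < n) (M : Matrix (Fin n) (Fin n) ℝ) (hM : M.IsHermitian)
    (y : Fin n → ℝ) :
    y ⬝ᵥ (M *ᵥ y) ≤ lam1 M hM * (y ⬝ᵥ y) ∧
    (y ⬝ᵥ (M *ᵥ y) = lam1 M hM * (y ⬝ᵥ y) → M *ᵥ y = lam1 M hM • y) := by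
  have : Nonempty (Fin n) := ⟨⟨0, hn⟩⟩
  set B := hM.eigenvectorBasis with hB
  set lam := hM.eigenvalues with hlam
  have horth : ∀ i j, (B i : Fin n → ℝ) ⬝ᵥ (B j : Fin n → ℝ) = if i = j then (1:ℝ) else 0 := by
    intro i j
    have h := orthonormal_iff_ite.mp B.orthonormal i j
    simpa [PiLp.inner_apply, RCLike.inner_apply, conj_trivial, dotProduct, mul_comm] using h
  set c : Fin n → ℝ := fun i => B.repr (WithLp.toLp 2 y) i with hc
  have hy : (∑ i, c i • (B i : Fin n → ℝ)) = y := by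
    have h := congrArg WithLp.ofLp (B.sum_repr (WithLp.toLp 2 y))
    simpa [hc] using h
  have hMB : ∀ i, M *ᵥ (B i : Fin n → ℝ) = lam i • (B i : Fin n → ℝ) :=
    hM.mulVec_eigenvectorBasis
  have hMy : M *ᵥ y = ∑ i, (lam i * c i) • (B i : Fin n → ℝ) := by
    rw [← hy, ← mulVecLin_apply, map_sum]
    refine Finset.sum_congr rfl fun i _ => ?_
    rw [LinearMap.map_smul, mulVecLin_apply, hMB i, smul_smul, mul_comm]
  have h1 : y ⬝ᵥ (M *ᵥ y) = ∑ i, lam i * (c i * c i) := by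
    rw [hMy, ← hy, dot_expand horth]
    exact Finset.sum_congr rfl fun i _ => by ring
  have h2 : y ⬝ᵥ y = ∑ i, c i * c i := by
    rw [← hy, dot_expand horth]
  have hle : ∀ i, lam i ≤ lam1 M hM :=
    fun i => le_ciSup (Set.Finite.bddAbove (Set.finite_range _)) i
  have hineq : y ⬝ᵥ (M *ᵥ y) ≤ lam1 M hM * (y ⬝ᵥ y) := by
    rw [h1, h2, Finset.mul_sum]
    exact Finset.sum_le_sum fun i _ =>
      mul_le_mul_of_nonneg_right (hle i) (mul_self_nonneg _)
  refine ⟨hineq, fun heq => ?_⟩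
  have hzero : ∀ i ∈ Finset.univ, (lam1 M hM - lam i) * (c i * c i) = 0 := by
    have hsum : ∑ i, (lam1 M hM - lam i) * (c i * c i) = 0 := by
      have h := heq
      rw [h1, h2, Finset.mul_sum] at h
      have h' := sub_eq_zero_of_eq h.symm
      rw [← Finset.sum_sub_distrib] at h'
      simpa [sub_mul] using h'
    exact fun i _ => (Finset.sum_eq_zero_iff_of_nonneg (fun i _ =>
      mul_nonneg (sub_nonneg.mpr (hle i)) (mul_self_nonneg _))).mp hsum i (Finset.mem_univ i)
  have hlc : ∀ i, lam i * c i = lam1 M hM * c i := by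
    intro i
    rcases mul_eq_zero.mp (hzero i (Finset.mem_univ i)) with h | h
    · rw [sub_eq_zero.mp h]
    · rw [mul_self_eq_zero.mp h, mul_zero, mul_zero]
  rw [hMy, ← hy, Finset.smul_sum]
  refine Finset.sum_congr rfl fun i _ => ?_
  rw [hlc i, smul_smul]

private lemma noBlock (A : Matrix (Fin n) (Fin n) ℝ) (hAirr : A.Irreducible)
    (P : Set (Fin n)) (i : Fin n) (hi : i ∈ P) (j : Fin n) (hj : j ∉ P)
    (h0 : ∀ p, p ∉ P → ∀ q, q ∈ P → A p q = 0) : False := by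
  classical
  have key : ∀ k, ∀ p, p ∉ P → ∀ q, q ∈ P → (A ^ (k + 1)) p q = 0 := by
    intro k
    induction k with
    | zero => simpa [pow_one] using h0
    | succ k ih =>
      intro p hp q hq
      rw [pow_succ, Matrix.mul_apply]
      refine Finset.sum_eq_zero fun l _ => ?_
      by_cases hl : l ∈ P
      · rw [ih p hp l hl, zero_mul]
      · rw [h0 l hl q hq, mul_zero]
  obtain ⟨k, hk, hpos⟩ := hAirr j i
  obtain ⟨k', rfl⟩ : ∃ k', k = k' + 1 := ⟨k - 1, (Nat.succ_pred_eq_of_pos hk).symm⟩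
  rw [key k' j hj i hi] at hpos
  exact lt_irrefl 0 hpos

end Aux
theorem stmt4 {n : ℕ} (hn : 0 < n) (A W M : Matrix (Fin n) (Fin n) ℝ)
    (hA : A.IsHermitian) (hApos : ∀ i j, 0 ≤ A i j) (hAirr : A.Irreducible)
    (hW : W.IsDiag) (v : Fin n → ℝ) (hv : v ≠ 0) (hvpos : ∀ i, 0 ≤ v i)
    (σ : ℝ) (hσ : 0 < σ)
    (hMdef : M = A + W - σ • vecMulVec v v) (hM : M.IsHermitian)
    (x : Fin n → ℝ) (hx : x ≠ 0) (heig : M *ᵥ x = lam1 M hM • x)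
    (hvx : 0 ≤ v ⬝ᵥ x) :
    ({i | 0 ≤ x i} : Set (Fin n)).Nonempty ∧
    (inducedSubgraph A {i | 0 ≤ x i}).Connected := by
  classical
  set m := lam1 M hM with hm
  set S : Set (Fin n) := {i | 0 ≤ x i} with hS
  have hSmem : ∀ i, i ∈ S ↔ 0 ≤ x i := fun i => Iff.rfl
  -- Part 1 : S is nonempty
  have hSne : S.Nonempty := by
    by_contra h
    have hneg : ∀ i, x i < 0 := by
      intro i
      by_contra h'
      exact h ⟨i, not_lt.mp h'⟩
    have hterm : ∀ i ∈ Finset.univ, v i * x i ≤ 0 :=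
      fun i _ => mul_nonpos_of_nonneg_of_nonpos (hvpos i) (hneg i).le
    have hsum0 : v ⬝ᵥ x = 0 := le_antisymm (Finset.sum_nonpos hterm) hvx
    have hall : ∀ i ∈ Finset.univ, v i * x i = 0 :=
      (Finset.sum_eq_zero_iff_of_nonpos hterm).mp hsum0
    apply hv
    funext i
    have := hall i (Finset.mem_univ i)
    rcases mul_eq_zero.mp this with h' | h'
    · exact h'
    · exact absurd h' (ne_of_lt (hneg i))
  refine ⟨hSne, ?_⟩
  -- symmetry of A
  have hAsym : ∀ i j, A i j = A j i := by
    intro i j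
    conv_lhs => rw [← hA.eq]
    simp [conjTranspose_apply]
  -- pointwise form of M *ᵥ z
  have hptgen : ∀ z : Fin n → ℝ, ∀ i,
      (M *ᵥ z) i = (∑ j, A i j * z j) + W i i * z i - σ * v i * (v ⬝ᵥ z) := by
    intro z i
    rw [hMdef]
    simp only [mulVec, dotProduct, Matrix.sub_apply, Matrix.add_apply, Matrix.smul_apply, vecMulVec_apply,
      smul_eq_mul]
    have hterm : ∀ j, (A i j + W i j - σ * (v i * v j)) * z j
        = A i j * z j + W i j * z j - σ * v i * (v j * z j) := fun j => by ring
    rw [Finset.sum_congr rfl fun j _ => hterm j, Finset.sum_sub_distrib,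
      Finset.sum_add_distrib, ← Finset.mul_sum]
    congr 1
    congr 1
    exact Finset.sum_eq_single i (fun b _ hb => by rw [hW (Ne.symm hb), zero_mul])
      (fun h => absurd (Finset.mem_univ i) h)
  have hpt : ∀ i, (∑ j, A i j * x j) + W i i * x i - σ * v i * (v ⬝ᵥ x) = m * x i := by
    intro i
    have h := congrFun heig i
    rw [Pi.smul_apply, smul_eq_mul] at h
    rw [← hptgen x i]
    exact h
  -- the connectivity part
  haveI : Nonempty ↥S := hSne.to_subtype
  rw [SimpleGraph.connected_iff]
  refine ⟨?_, inferInstance⟩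
  intro u w
  by_contra hnr
  set G := inducedSubgraph A S with hG
  set S₁ : Set (Fin n) := {i | ∃ h : i ∈ S, G.Reachable u ⟨i, h⟩} with hS₁
  have hS₁S : S₁ ⊆ S := by
    intro i hi
    obtain ⟨h, -⟩ := hi
    exact h
  have hu1 : (u : Fin n) ∈ S₁ := ⟨u.2, by exact SimpleGraph.Reachable.refl _⟩
  have hw1 : (w : Fin n) ∉ S₁ := by
    rintro ⟨h, hr⟩
    exact hnr hr
  set S₂ : Set (Fin n) := {i | i ∈ S ∧ i ∉ S₁} with hS₂
  have hw2 : (w : Fin n) ∈ S₂ := ⟨w.2, hw1⟩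
  have hu2 : (u : Fin n) ∉ S₂ := fun h => h.2 hu1
  have htri : ∀ i, i ∈ S → i ∈ S₁ ∨ i ∈ S₂ := by
    intro i hi
    by_cases h : i ∈ S₁
    · exact Or.inl h
    · exact Or.inr ⟨hi, h⟩
  have hcross : ∀ i ∈ S₁, ∀ j ∈ S, j ∉ S₁ → A i j = 0 := by
    intro i hi j hjS hj1
    by_contra hne
    have hpos : 0 < A i j := lt_of_le_of_ne (hApos i j) (Ne.symm hne)
    obtain ⟨hiS, hr⟩ := hi
    have hij : i ≠ j := fun h => hj1 (h ▸ ⟨hiS, hr⟩)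
    have hadj : G.Adj ⟨i, hiS⟩ ⟨j, hjS⟩ := by
      rw [hG, inducedSubgraph, SimpleGraph.fromRel_adj]
      exact ⟨fun hh => hij (congrArg Subtype.val hh), Or.inl hpos⟩
    exact hj1 ⟨hjS, hr.trans hadj.reachable⟩
  -- finset partitions
  set F1 : Finset (Fin n) := Finset.univ.filter (fun j => j ∈ S₁) with hF1
  set F2 : Finset (Fin n) := Finset.univ.filter (fun j => j ∈ S₂) with hF2
  set F0 : Finset (Fin n) := Finset.univ.filter (fun j => j ∉ S) with hF0
  have hsplit : ∀ g : Fin n → ℝ,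
      (∑ j, g j) = (∑ j ∈ F1, g j) + (∑ j ∈ F2, g j) + (∑ j ∈ F0, g j) := by
    intro g
    rw [← Finset.sum_filter_add_sum_filter_not Finset.univ (fun j => j ∈ S) g]
    have e0 : Finset.univ.filter (fun j => ¬ j ∈ S) = F0 := rfl
    have e1 : (Finset.univ.filter (fun j => j ∈ S)).filter (fun j => j ∈ S₁) = F1 := by
      ext j
      simp only [Finset.mem_filter, Finset.mem_univ, true_and, hF1]
      exact ⟨fun h => h.2, fun h => ⟨hS₁S h, h⟩⟩
    have e2 : (Finset.univ.filter (fun j => j ∈ S)).filter (fun j => ¬ j ∈ S₁) = F2 := by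
      ext j
      simp only [Finset.mem_filter, Finset.mem_univ, true_and, hF2, hS₂, Set.mem_setOf_eq]
    rw [e0, ← Finset.sum_filter_add_sum_filter_not (Finset.univ.filter (fun j => j ∈ S))
      (fun j => j ∈ S₁) g, e1, e2]
  set T1 : (Fin n) → ℝ := fun i => ∑ j ∈ F1, A i j * x j with hT1def
  set T2 : (Fin n) → ℝ := fun i => ∑ j ∈ F2, A i j * x j with hT2def
  set T0 : (Fin n) → ℝ := fun i => ∑ j ∈ F0, A i j * x j with hT0def
  have hT0 : ∀ i, T0 i ≤ 0 := by
    intro i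
    refine Finset.sum_nonpos fun j hj => ?_
    rw [hF0, Finset.mem_filter] at hj
    have : x j < 0 := not_le.mp hj.2
    exact mul_nonpos_of_nonneg_of_nonpos (hApos i j) this.le
  have hE1 : ∀ i ∈ S₁, T1 i + W i i * x i + T0 i - σ * v i * (v ⬝ᵥ x) = m * x i := by
    intro i hi
    have h := hpt i
    rw [hsplit (fun j => A i j * x j)] at h
    have h2 : (∑ j ∈ F2, A i j * x j) = 0 := by
      refine Finset.sum_eq_zero fun j hj => ?_
      rw [hF2, Finset.mem_filter] at hj
      rw [hcross i hi j hj.2.1 hj.2.2, zero_mul]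
    rw [h2] at h
    rw [hT1def, hT0def]
    linarith [h]
  have hE2 : ∀ i ∈ S₂, T2 i + W i i * x i + T0 i - σ * v i * (v ⬝ᵥ x) = m * x i := by
    intro i hi
    have h := hpt i
    rw [hsplit (fun j => A i j * x j)] at h
    have h1 : (∑ j ∈ F1, A i j * x j) = 0 := by
      refine Finset.sum_eq_zero fun j hj => ?_
      rw [hF1, Finset.mem_filter] at hj
      rw [hAsym, hcross j hj.2 i hi.1 hi.2, zero_mul]
    rw [h1] at h
    rw [hT2def, hT0def]
    linarith [h]
  have hσvV : ∀ i, 0 ≤ σ * v i * (v ⬝ᵥ x) :=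
    fun i => mul_nonneg (mul_nonneg hσ.le (hvpos i)) hvx
  -- Case A : x vanishes identically on S₁
  by_cases hcase1 : ∀ i ∈ S₁, x i = 0
  · have hzero : ∀ i ∈ S₁, ∀ j, j ∉ S₁ → A i j = 0 := by
      intro i hi j hj
      by_cases hjS : j ∈ S
      · exact hcross i hi j hjS hj
      · have h := hE1 i hi
        have hx0 : x i = 0 := hcase1 i hi
        have hT1i : T1 i = 0 := by
          refine Finset.sum_eq_zero fun l hl => ?_
          rw [hF1, Finset.mem_filter] at hl
          rw [hcase1 l hl.2, mul_zero]
        have hT0i : T0 i = 0 := by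
          have h1 : T0 i = σ * v i * (v ⬝ᵥ x) := by
            rw [hT1i, hx0] at h
            linarith [h]
          exact le_antisymm (hT0 i) (h1 ▸ hσvV i)
        have hterm : ∀ l ∈ F0, A i l * x l ≤ 0 := by
          intro l hl
          rw [hF0, Finset.mem_filter] at hl
          exact mul_nonpos_of_nonneg_of_nonpos (hApos i l) (not_le.mp hl.2).le
        have hjz := (Finset.sum_eq_zero_iff_of_nonpos hterm).mp hT0i j
          (by rw [hF0, Finset.mem_filter]; exact ⟨Finset.mem_univ j, hjS⟩)
        have hxj : x j < 0 := not_le.mp hjS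
        exact (mul_eq_zero.mp hjz).resolve_right (ne_of_lt hxj)
    exact noBlock A hAirr S₁ u.1 hu1 w.1 hw1
      (fun p hp q hq => by rw [hAsym p q]; exact hzero q hq p hp)
  -- Case B : x vanishes identically on S₂
  by_cases hcase2 : ∀ i ∈ S₂, x i = 0
  · have hzero : ∀ i ∈ S₂, ∀ j, j ∉ S₂ → A i j = 0 := by
      intro i hi j hj
      by_cases hjS : j ∈ S
      · have hj1 : j ∈ S₁ := (htri j hjS).resolve_right hj
        rw [hAsym]
        exact hcross j hj1 i hi.1 hi.2
      · have h := hE2 i hi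
        have hx0 : x i = 0 := hcase2 i hi
        have hT2i : T2 i = 0 := by
          refine Finset.sum_eq_zero fun l hl => ?_
          rw [hF2, Finset.mem_filter] at hl
          rw [hcase2 l hl.2, mul_zero]
        have hT0i : T0 i = 0 := by
          have h1 : T0 i = σ * v i * (v ⬝ᵥ x) := by
            rw [hT2i, hx0] at h
            linarith [h]
          exact le_antisymm (hT0 i) (h1 ▸ hσvV i)
        have hterm : ∀ l ∈ F0, A i l * x l ≤ 0 := by
          intro l hl
          rw [hF0, Finset.mem_filter] at hl
          exact mul_nonpos_of_nonneg_of_nonpos (hApos i l) (not_le.mp hl.2).le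
        have hjz := (Finset.sum_eq_zero_iff_of_nonpos hterm).mp hT0i j
          (by rw [hF0, Finset.mem_filter]; exact ⟨Finset.mem_univ j, hjS⟩)
        have hxj : x j < 0 := not_le.mp hjS
        exact (mul_eq_zero.mp hjz).resolve_right (ne_of_lt hxj)
    exact noBlock A hAirr S₂ w.1 hw2 u.1 hu2
      (fun p hp q hq => by rw [hAsym p q]; exact hzero q hq p hp)
  -- Case C : x is positive somewhere on S₁ and somewhere on S₂
  push_neg at hcase1 hcase2
  obtain ⟨i₁, hi₁, hxi₁⟩ := hcase1
  obtain ⟨i₂, hi₂, hxi₂⟩ := hcase2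
  have hxi₁pos : 0 < x i₁ := lt_of_le_of_ne (hS₁S hi₁) (Ne.symm hxi₁)
  have hxi₂pos : 0 < x i₂ := lt_of_le_of_ne hi₂.1 (Ne.symm hxi₂)
  set x1 : Fin n → ℝ := fun i => if i ∈ S₁ then x i else 0 with hx1
  set x2 : Fin n → ℝ := fun i => if i ∈ S₂ then x i else 0 with hx2
  set a := v ⬝ᵥ x1 with haDef
  set b := v ⬝ᵥ x2 with hbDef
  have ha : 0 ≤ a := by
    refine Finset.sum_nonneg fun i _ => mul_nonneg (hvpos i) ?_
    show (0:ℝ) ≤ if i ∈ S₁ then x i else 0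
    split_ifs with h
    · exact hS₁S h
    · exact le_refl 0
  obtain ⟨α, β, hab, hbr⟩ : ∃ α β : ℝ, α * a + β * b = 0 ∧
      ((α = 1 ∧ β = 0 ∧ a = 0) ∨ (β = -a ∧ a ≠ 0)) := by
    rcases eq_or_ne a 0 with h | h
    · exact ⟨1, 0, by rw [h]; ring, Or.inl ⟨rfl, rfl, h⟩⟩
    · exact ⟨b, -a, by ring, Or.inr ⟨rfl, h⟩⟩
  set y : Fin n → ℝ := fun i => α * x1 i + β * x2 i with hy
  have h12 : ∀ i, i ∈ S₁ → i ∉ S₂ := fun i hi h => h.2 hi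
  have hyS1 : ∀ i ∈ S₁, y i = α * x i := by
    intro i hi
    rw [hy]
    simp only [hx1, hx2, if_pos hi, if_neg (h12 i hi)]
    ring
  have hyS2 : ∀ i ∈ S₂, y i = β * x i := by
    intro i hi
    rw [hy]
    simp only [hx1, hx2, if_pos hi, if_neg hi.2]
    ring
  have hyout : ∀ i, i ∉ S → y i = 0 := by
    intro i hi
    rw [hy]
    simp only [hx1, hx2, if_neg (fun h => hi (hS₁S h)), if_neg (fun h : i ∈ S₂ => hi h.1)]
    ring
  have hyne_imp : ∀ i, y i ≠ 0 → i ∈ S := by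
    intro i h
    by_contra h'
    exact h (hyout i h')
  have hvy : v ⬝ᵥ y = 0 := by
    have hterm : ∀ i ∈ Finset.univ, v i * y i = α * (v i * x1 i) + β * (v i * x2 i) :=
      fun i _ => by rw [hy]; ring
    calc v ⬝ᵥ y = ∑ i, (α * (v i * x1 i) + β * (v i * x2 i)) :=
          Finset.sum_congr rfl hterm
      _ = α * a + β * b := by
          rw [Finset.sum_add_distrib, ← Finset.mul_sum, ← Finset.mul_sum]
          rfl
      _ = 0 := hab
  have hyex : ∃ i, y i ≠ 0 := by
    rcases hbr with ⟨hα, hβ, ha0⟩ | ⟨hβ, hane⟩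
    · exact ⟨i₁, by rw [hyS1 i₁ hi₁, hα, one_mul]; exact hxi₁⟩
    · exact ⟨i₂, by rw [hyS2 i₂ hi₂, hβ]; exact mul_ne_zero (neg_ne_zero.mpr hane) hxi₂⟩
  -- action of M on y
  have hMyp : ∀ i, (M *ᵥ y) i = (∑ j, A i j * y j) + W i i * y i := by
    intro i
    rw [hptgen y i, hvy]
    ring
  have hAy1 : ∀ i ∈ S₁, (∑ j, A i j * y j) = α * T1 i := by
    intro i hi
    rw [hsplit (fun j => A i j * y j)]
    have e1 : (∑ j ∈ F1, A i j * y j) = α * T1 i := by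
      rw [hT1def, Finset.mul_sum]
      refine Finset.sum_congr rfl fun j hj => ?_
      rw [hF1, Finset.mem_filter] at hj
      rw [hyS1 j hj.2]
      ring
    have e2 : (∑ j ∈ F2, A i j * y j) = 0 :=
      Finset.sum_eq_zero fun j hj => by
        rw [hF2, Finset.mem_filter] at hj
        rw [hcross i hi j hj.2.1 hj.2.2, zero_mul]
    have e0 : (∑ j ∈ F0, A i j * y j) = 0 :=
      Finset.sum_eq_zero fun j hj => by
        rw [hF0, Finset.mem_filter] at hj
        rw [hyout j hj.2, mul_zero]
    rw [e1, e2, e0]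
    ring
  have hAy2 : ∀ i ∈ S₂, (∑ j, A i j * y j) = β * T2 i := by
    intro i hi
    rw [hsplit (fun j => A i j * y j)]
    have e1 : (∑ j ∈ F1, A i j * y j) = 0 :=
      Finset.sum_eq_zero fun j hj => by
        rw [hF1, Finset.mem_filter] at hj
        rw [hAsym, hcross j hj.2 i hi.1 hi.2, zero_mul]
    have e2 : (∑ j ∈ F2, A i j * y j) = β * T2 i := by
      rw [hT2def, Finset.mul_sum]
      refine Finset.sum_congr rfl fun j hj => ?_
      rw [hF2, Finset.mem_filter] at hj
      rw [hyS2 j hj.2]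
      ring
    have e0 : (∑ j ∈ F0, A i j * y j) = 0 :=
      Finset.sum_eq_zero fun j hj => by
        rw [hF0, Finset.mem_filter] at hj
        rw [hyout j hj.2, mul_zero]
    rw [e1, e2, e0]
    ring
  -- the slack function
  set s : Fin n → ℝ :=
    fun i => y i * ((∑ j, A i j * y j) + W i i * y i) - m * (y i * y i) with hsdef
  have hs1 : ∀ i ∈ S₁, s i = (α * α) * (x i * (σ * v i * (v ⬝ᵥ x) - T0 i)) := by
    intro i hi
    show y i * ((∑ j, A i j * y j) + W i i * y i) - m * (y i * y i)
      = (α * α) * (x i * (σ * v i * (v ⬝ᵥ x) - T0 i))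
    rw [hAy1 i hi, hyS1 i hi]
    linear_combination (α * α * x i) * (hE1 i hi)
  have hs2 : ∀ i ∈ S₂, s i = (β * β) * (x i * (σ * v i * (v ⬝ᵥ x) - T0 i)) := by
    intro i hi
    show y i * ((∑ j, A i j * y j) + W i i * y i) - m * (y i * y i)
      = (β * β) * (x i * (σ * v i * (v ⬝ᵥ x) - T0 i))
    rw [hAy2 i hi, hyS2 i hi]
    linear_combination (β * β * x i) * (hE2 i hi)
  have hs0 : ∀ i, i ∉ S → s i = 0 := by
    intro i hi
    show y i * ((∑ j, A i j * y j) + W i i * y i) - m * (y i * y i) = 0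
    rw [hyout i hi]
    ring
  have hsnn : ∀ i, 0 ≤ s i := by
    intro i
    by_cases hiS : i ∈ S
    · have h0 : 0 ≤ σ * v i * (v ⬝ᵥ x) - T0 i := by linarith [hσvV i, hT0 i]
      rcases htri i hiS with h1 | h2
      · rw [hs1 i h1]
        exact mul_nonneg (mul_self_nonneg α) (mul_nonneg hiS h0)
      · rw [hs2 i h2]
        exact mul_nonneg (mul_self_nonneg β) (mul_nonneg hiS h0)
    · rw [hs0 i hiS]
  have hsum_s : (∑ i, s i) = y ⬝ᵥ (M *ᵥ y) - m * (y ⬝ᵥ y) := by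
    have h1 : y ⬝ᵥ (M *ᵥ y) = ∑ i, y i * ((∑ j, A i j * y j) + W i i * y i) := by
      simp only [dotProduct]
      exact Finset.sum_congr rfl fun i _ => by rw [hMyp i]
    have h2 : m * (y ⬝ᵥ y) = ∑ i, m * (y i * y i) := by
      simp only [dotProduct, Finset.mul_sum]
    rw [h1, h2, ← Finset.sum_sub_distrib]
  have hray := rayleigh hn M hM y
  have hsumle : (∑ i, s i) ≤ 0 := by
    rw [hsum_s]
    linarith [hray.1]
  have hsum0 : (∑ i, s i) = 0 :=
    le_antisymm hsumle (Finset.sum_nonneg fun i _ => hsnn i)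
  have hsz : ∀ i, s i = 0 := fun i =>
    (Finset.sum_eq_zero_iff_of_nonneg (fun i _ => hsnn i)).mp hsum0 i (Finset.mem_univ i)
  have heqy : y ⬝ᵥ (M *ᵥ y) = m * (y ⬝ᵥ y) := by
    have h := hsum_s
    rw [hsum0] at h
    linarith [h]
  have heigy : M *ᵥ y = m • y := hray.2 heqy
  have hyeig : ∀ j, (∑ l, A j l * y l) + W j j * y j = m * y j := by
    intro j
    have h := congrFun heigy j
    rw [Pi.smul_apply, smul_eq_mul] at h
    rw [← hMyp j]
    exact h
  -- vertices carrying y have no edges out of S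
  have hT0y : ∀ i, y i ≠ 0 → ∀ j, j ∉ S → A i j = 0 := by
    intro i hyi j hjS
    have hiS : i ∈ S := hyne_imp i hyi
    have hterm : ∀ l ∈ F0, A i l * x l ≤ 0 := fun l hl => by
      rw [hF0, Finset.mem_filter] at hl
      exact mul_nonpos_of_nonneg_of_nonpos (hApos i l) (not_le.mp hl.2).le
    have hT0i : T0 i = 0 := by
      rcases htri i hiS with h1 | h2
      · have hax : α * x i ≠ 0 := by rw [← hyS1 i h1]; exact hyi
        have hs := hsz i
        rw [hs1 i h1] at hs
        have hαα : α * α ≠ 0 :=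
          mul_ne_zero (left_ne_zero_of_mul hax) (left_ne_zero_of_mul hax)
        have h2' : x i * (σ * v i * (v ⬝ᵥ x) - T0 i) = 0 :=
          (mul_eq_zero.mp hs).resolve_left hαα
        have h3 : σ * v i * (v ⬝ᵥ x) - T0 i = 0 :=
          (mul_eq_zero.mp h2').resolve_left (right_ne_zero_of_mul hax)
        linarith [hσvV i, hT0 i]
      · have hax : β * x i ≠ 0 := by rw [← hyS2 i h2]; exact hyi
        have hs := hsz i
        rw [hs2 i h2] at hs
        have hββ : β * β ≠ 0 :=
          mul_ne_zero (left_ne_zero_of_mul hax) (left_ne_zero_of_mul hax)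
        have h2' : x i * (σ * v i * (v ⬝ᵥ x) - T0 i) = 0 :=
          (mul_eq_zero.mp hs).resolve_left hββ
        have h3 : σ * v i * (v ⬝ᵥ x) - T0 i = 0 :=
          (mul_eq_zero.mp h2').resolve_left (right_ne_zero_of_mul hax)
        linarith [hσvV i, hT0 i]
    have hjz := (Finset.sum_eq_zero_iff_of_nonpos hterm).mp hT0i j
      (by rw [hF0, Finset.mem_filter]; exact ⟨Finset.mem_univ j, hjS⟩)
    exact (mul_eq_zero.mp hjz).resolve_right (ne_of_lt (not_le.mp hjS))
  -- final contradiction via irreducibility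
  by_cases hAllP : ∀ i, y i ≠ 0
  · exact noBlock A hAirr S₁ u.1 hu1 w.1 hw1 (fun p hp q hq => by
      rw [hAsym]
      exact hcross q hq p (hyne_imp p (hAllP p)) hp)
  · push_neg at hAllP
    obtain ⟨j₀, hj₀⟩ := hAllP
    obtain ⟨iP, hiP⟩ := hyex
    refine noBlock A hAirr {i | y i ≠ 0} iP hiP j₀ (by simp [hj₀]) ?_
    intro p hp q hq
    have hyp : y p = 0 := not_not.mp hp
    have hq' : y q ≠ 0 := hq
    have hqS : q ∈ S := hyne_imp q hq'
    by_cases hpS : p ∈ S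
    · rcases htri p hpS with hp1 | hp2
      · rcases htri q hqS with hq1 | hq2
        · have hqa : α * x q ≠ 0 := by rw [← hyS1 q hq1]; exact hq'
          have hsum0' : α * T1 p = 0 := by
            have h := hyeig p
            rw [hyp, mul_zero, mul_zero, add_zero] at h
            rw [← hAy1 p hp1]
            exact h
          have hT1p : T1 p = 0 :=
            (mul_eq_zero.mp hsum0').resolve_left (left_ne_zero_of_mul hqa)
          have hterm : ∀ l ∈ F1, 0 ≤ A p l * x l := fun l hl => by
            rw [hF1, Finset.mem_filter] at hl
            exact mul_nonneg (hApos p l) (hS₁S hl.2)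
          have hz := (Finset.sum_eq_zero_iff_of_nonneg hterm).mp hT1p q
            (by rw [hF1, Finset.mem_filter]; exact ⟨Finset.mem_univ q, hq1⟩)
          exact (mul_eq_zero.mp hz).resolve_right (right_ne_zero_of_mul hqa)
        · exact hcross p hp1 q hq2.1 hq2.2
      · rcases htri q hqS with hq1 | hq2
        · rw [hAsym]
          exact hcross q hq1 p hpS hp2.2
        · have hqb : β * x q ≠ 0 := by rw [← hyS2 q hq2]; exact hq'
          have hsum0' : β * T2 p = 0 := by
            have h := hyeig p
            rw [hyp, mul_zero, mul_zero, add_zero] at h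
            rw [← hAy2 p hp2]
            exact h
          have hT2p : T2 p = 0 :=
            (mul_eq_zero.mp hsum0').resolve_left (left_ne_zero_of_mul hqb)
          have hterm : ∀ l ∈ F2, 0 ≤ A p l * x l := fun l hl => by
            rw [hF2, Finset.mem_filter] at hl
            exact mul_nonneg (hApos p l) hl.2.1
          have hz := (Finset.sum_eq_zero_iff_of_nonneg hterm).mp hT2p q
            (by rw [hF2, Finset.mem_filter]; exact ⟨Finset.mem_univ q, hq2⟩)
          exact (mul_eq_zero.mp hz).resolve_right (right_ne_zero_of_mul hqb)
    · rw [hAsym]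
      exact hT0y q hq' p hpS
end

section
/- Let M = A + W − σ·v·vᵀ be a generalized modularity matrix, let x ∈ ℝⁿ be a nonzero vector with M x = m_G x and vᵀx ≥ 0, and let y ∈ ℝⁿ be an entrywise positive eigenvector of A+W associated with its largest eigenvalue λ₁(A+W). Then for every real ε ≥ 0, the set S = { i : xᵢ + ε·yᵢ ≥ 0 } is nonempty and induces a connected subgraph. -/
open Matrix BigOperators

namespace ModHelper

variable {n : ℕ}

lemma eig_le_lam1 {X : Matrix (Fin n) (Fin n) ℝ} (hX : X.IsHermitian) (i : Fin n) :
    hX.eigenvalues i ≤ lam1 X hX :=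
  le_ciSup (Set.Finite.bddAbove (Set.finite_range _)) i

lemma posSemidef_shift {X : Matrix (Fin n) (Fin n) ℝ} (hX : X.IsHermitian) :
    ((lam1 X hX) • (1 : Matrix (Fin n) (Fin n) ℝ) - X).PosSemidef := by
  set c := lam1 X hX with hc
  set U : Matrix (Fin n) (Fin n) ℝ := (hX.eigenvectorUnitary : Matrix (Fin n) (Fin n) ℝ) with hU
  have hUU : U * star U = 1 := (Matrix.mem_unitaryGroup_iff).mp hX.eigenvectorUnitary.2
  have hdiag : (diagonal (RCLike.ofReal ∘ hX.eigenvalues) : Matrix (Fin n) (Fin n) ℝ)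
      = diagonal (fun i => hX.eigenvalues i) := by
    congr 1
  have hd : diagonal (fun i => c - hX.eigenvalues i)
      = c • (1 : Matrix (Fin n) (Fin n) ℝ) - diagonal (fun i => hX.eigenvalues i) := by
    rw [← diagonal_sub]
    congr 1
    ext i
    simp [Matrix.one_apply, Matrix.diagonal_apply]
  have key : c • (1 : Matrix (Fin n) (Fin n) ℝ) - X =
      U * diagonal (fun i => c - hX.eigenvalues i) * star U := by
    rw [hd, mul_sub, sub_mul]
    rw [Matrix.mul_smul, mul_one, Matrix.smul_mul, hUU]
    congr 1
    conv_lhs => rw [hX.spectral_theorem, hdiag, Unitary.conjStarAlgAut_apply]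
  rw [key]
  exact (posSemidef_diagonal_iff.mpr fun i =>
    sub_nonneg.mpr (eig_le_lam1 hX i)).mul_mul_conjTranspose_same U

lemma rayleigh_le {X : Matrix (Fin n) (Fin n) ℝ} (hX : X.IsHermitian) (w : Fin n → ℝ) :
    w ⬝ᵥ (X *ᵥ w) ≤ lam1 X hX * (w ⬝ᵥ w) := by
  have h := (posSemidef_shift hX).dotProduct_mulVec_nonneg w
  simp only [star_trivial] at h
  rw [sub_mulVec, smul_mulVec, one_mulVec, dotProduct_sub, dotProduct_smul] at h
  simp only [smul_eq_mul] at h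
  linarith

lemma eigen_of_rayleigh_eq {X : Matrix (Fin n) (Fin n) ℝ} (hX : X.IsHermitian) (w : Fin n → ℝ)
    (h : w ⬝ᵥ (X *ᵥ w) = lam1 X hX * (w ⬝ᵥ w)) : X *ᵥ w = lam1 X hX • w := by
  have h0 : star w ⬝ᵥ ((lam1 X hX • (1 : Matrix (Fin n) (Fin n) ℝ) - X) *ᵥ w) = 0 := by
    simp only [star_trivial]
    rw [sub_mulVec, smul_mulVec, one_mulVec, dotProduct_sub, dotProduct_smul]
    simp only [smul_eq_mul]
    linarith
  have h1 := ((posSemidef_shift hX).dotProduct_mulVec_zero_iff w).mp h0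
  rw [sub_mulVec, smul_mulVec, one_mulVec, sub_eq_zero] at h1
  exact h1.symm

lemma no_closed_set {A : Matrix (Fin n) (Fin n) ℝ}
    (hAirr : ∀ i j, ∃ k : ℕ, 0 < k ∧ 0 < (A ^ k) i j)
    (P : Set (Fin n)) {i0 j0 : Fin n} (hi0 : i0 ∈ P) (hj0 : j0 ∉ P)
    (hcl : ∀ i ∈ P, ∀ j, j ∉ P → A i j = 0) : False := by
  have key : ∀ k : ℕ, ∀ i j : Fin n, i ∈ P → j ∉ P → (A ^ k) i j = 0 := by
    intro k
    induction k with
    | zero =>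
      intro i j hi hj
      have hij : i ≠ j := fun h => hj (h ▸ hi)
      simp [Matrix.one_apply, hij]
    | succ k ih =>
      intro i j hi hj
      rw [pow_succ, Matrix.mul_apply]
      refine Finset.sum_eq_zero fun l _ => ?_
      by_cases hl : l ∈ P
      · rw [hcl l hl j hj, mul_zero]
      · rw [ih i l hi hl, zero_mul]
  obtain ⟨k, -, hpos⟩ := hAirr i0 j0
  rw [key k i0 j0 hi0 hj0] at hpos
  exact lt_irrefl 0 hpos

lemma dot_comb (x u : Fin n → ℝ) (a t : ℝ) :
    (x ⬝ᵥ fun i => a * x i + t * u i) = a * (x ⬝ᵥ x) + t * (u ⬝ᵥ x) := by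
  simp only [dotProduct, Finset.mul_sum, ← Finset.sum_add_distrib]
  exact Finset.sum_congr rfl fun i _ => by ring

lemma dot_scaled (w u : Fin n → ℝ) (t : ℝ) :
    (w ⬝ᵥ fun i => t * u i) = t * (u ⬝ᵥ w) := by
  simp only [dotProduct, Finset.mul_sum]
  exact Finset.sum_congr rfl fun i _ => by ring

end ModHelper

theorem stmt5 {n : ℕ} (hn : 0 < n) (A W M : Matrix (Fin n) (Fin n) ℝ)
    (hA : A.IsHermitian) (hApos : ∀ i j, 0 ≤ A i j) (hAirr : A.Irreducible)
    (hW : W.IsDiag) (v : Fin n → ℝ) (hv : v ≠ 0) (hvpos : ∀ i, 0 ≤ v i)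
    (σ : ℝ) (hσ : 0 < σ)
    (hMdef : M = A + W - σ • vecMulVec v v) (hM : M.IsHermitian)
    (hAW : (A + W).IsHermitian)
    (x : Fin n → ℝ) (hx : x ≠ 0) (hxeig : M *ᵥ x = lam1 M hM • x)
    (hvx : 0 ≤ v ⬝ᵥ x)
    (y : Fin n → ℝ) (hy : ∀ i, 0 < y i)
    (hyeig : (A + W) *ᵥ y = lam1 (A + W) hAW • y) :
    ∀ ε : ℝ, 0 ≤ ε →
      ({i | 0 ≤ x i + ε * y i} : Set (Fin n)).Nonempty ∧
      (inducedSubgraph A {i | 0 ≤ x i + ε * y i}).Connected := by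
  classical
  intro ε hε
  set m := lam1 M hM with hmdef
  set r := lam1 (A + W) hAW with hrdef
  -- some i with 0 ≤ x i
  have hex : ∃ i, 0 ≤ x i := by
    by_contra h
    push_neg at h
    have h2 : v ⬝ᵥ x ≤ 0 :=
      Finset.sum_nonpos fun i _ => mul_nonpos_of_nonneg_of_nonpos (hvpos i) (h i).le
    have h3 : v ⬝ᵥ x = 0 := le_antisymm h2 hvx
    apply hv
    funext i
    have h4 := (Finset.sum_eq_zero_iff_of_nonpos
      (fun i _ => mul_nonpos_of_nonneg_of_nonpos (hvpos i) (h i).le)).mp h3 i (Finset.mem_univ i)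
    rcases mul_eq_zero.mp h4 with h5 | h5
    · exact h5
    · exact absurd h5 (ne_of_lt (h i))
  obtain ⟨i₀, hi₀⟩ := hex
  have hi₀S : i₀ ∈ ({i | 0 ≤ x i + ε * y i} : Set (Fin n)) := by
    have := add_nonneg hi₀ (mul_nonneg hε (hy i₀).le)
    simpa using this
  set Sset : Set (Fin n) := {i | 0 ≤ x i + ε * y i} with hSdef
  refine ⟨⟨i₀, hi₀S⟩, ?_⟩
  set z : Fin n → ℝ := fun i => x i + ε * y i with hzdef
  have hmemS : ∀ i, i ∈ Sset ↔ 0 ≤ z i := fun i => Iff.rfl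
  -- symmetry of A, off-diagonal of W
  have hAsym : ∀ i j, A i j = A j i := by
    intro i j
    conv_lhs => rw [← hA]
    simp [conjTranspose_apply]
  -- rank-one action
  have hvv : ∀ u : Fin n → ℝ, (vecMulVec v v) *ᵥ u = fun i => (v ⬝ᵥ u) * v i := by
    intro u
    funext i
    simp only [Matrix.mulVec, dotProduct, Matrix.vecMulVec_apply]
    rw [Finset.sum_mul]
    exact Finset.sum_congr rfl fun j _ => by ring
  -- B x equation
  have hBx : (A + W) *ᵥ x = fun i => m * x i + σ * (v ⬝ᵥ x) * v i := by
    have h1 : (A + W) *ᵥ x = M *ᵥ x + σ • ((vecMulVec v v) *ᵥ x) := by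
      rw [hMdef, sub_mulVec, smul_mulVec, sub_add_cancel]
    funext i
    rw [h1, hxeig, hvv]
    simp only [Pi.add_apply, Pi.smul_apply, smul_eq_mul]
    ring
  -- m ≤ r
  have hm_le_r : m ≤ r := by
    have hxx : 0 < x ⬝ᵥ x := by
      have h0 : 0 ≤ x ⬝ᵥ x := Finset.sum_nonneg fun i _ => mul_self_nonneg (x i)
      have h1 : x ⬝ᵥ x ≠ 0 := fun h => hx (dotProduct_self_eq_zero.mp h)
      exact lt_of_le_of_ne h0 (Ne.symm h1)
    have e1 : x ⬝ᵥ ((A + W) *ᵥ x) = m * (x ⬝ᵥ x) + σ * (v ⬝ᵥ x) * (v ⬝ᵥ x) := by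
      rw [hBx, ModHelper.dot_comb x v m (σ * (v ⬝ᵥ x))]
    have e2 := ModHelper.rayleigh_le hAW x
    rw [← hrdef] at e2
    have e3 : 0 ≤ σ * (v ⬝ᵥ x) * (v ⬝ᵥ x) := mul_nonneg (mul_nonneg hσ.le hvx) hvx
    nlinarith
  -- slack vector
  set s : Fin n → ℝ := fun i => σ * (v ⬝ᵥ x) * v i + ε * (r - m) * y i with hsdef
  have hs : ∀ i, 0 ≤ s i := fun i =>
    add_nonneg (mul_nonneg (mul_nonneg hσ.le hvx) (hvpos i))
      (mul_nonneg (mul_nonneg hε (sub_nonneg.mpr hm_le_r)) (hy i).le)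
  have hBz : ∀ i, ((A + W) *ᵥ z) i = m * z i + s i := by
    intro i
    have h1 : (A + W) *ᵥ z = (A + W) *ᵥ x + ε • ((A + W) *ᵥ y) := by
      have hz2 : z = x + ε • y := funext fun i => by simp [hzdef, smul_eq_mul]
      rw [hz2, mulVec_add, mulVec_smul]
    rw [h1]
    have h2 := congrFun hBx i
    have h3 := congrFun hyeig i
    simp only [Pi.add_apply, Pi.smul_apply, smul_eq_mul] at h2 h3 ⊢
    rw [h2, h3]
    simp only [hzdef, hsdef]
    ring
  -- now connectivity
  rw [SimpleGraph.connected_iff]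
  refine ⟨?_, ⟨⟨i₀, hi₀S⟩⟩⟩
  intro ua ub
  by_contra hnr
  set P : Set (Fin n) :=
    {j | ∃ h : j ∈ Sset, (inducedSubgraph A Sset).Reachable ua ⟨j, h⟩} with hPdef
  have hPsub : P ⊆ Sset := by
    intro j hj
    obtain ⟨h, -⟩ := hj
    exact h
  have hua : (ua : Fin n) ∈ P := ⟨ua.2, SimpleGraph.Reachable.refl _⟩
  have hub : (ub : Fin n) ∉ P := by
    rintro ⟨h, hr⟩
    exact hnr hr
  have hclS : ∀ i ∈ P, ∀ j, j ∈ Sset → 0 < A i j → j ∈ P := by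
    intro i hiP j hjS hAij
    obtain ⟨hiS, hreach⟩ := hiP
    by_cases hij : i = j
    · subst hij
      exact ⟨hiS, hreach⟩
    · refine ⟨hjS, hreach.trans (SimpleGraph.Adj.reachable ?_)⟩
      show (inducedSubgraph A Sset).Adj ⟨i, hiS⟩ ⟨j, hjS⟩
      simp only [inducedSubgraph, SimpleGraph.fromRel_adj]
      refine ⟨?_, Or.inl hAij⟩
      intro hcon
      exact hij (Subtype.ext_iff.mp hcon)
  have hedge : ∀ i ∈ P, ∀ j, j ∈ Sset → j ∉ P → A i j = 0 := fun i hi j hjS hjP =>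
    le_antisymm (not_lt.mp fun hpos => hjP (hclS i hi j hjS hpos)) (hApos i j)
  -- the boundary sums
  set c : Fin n → ℝ := fun i => ∑ j, if 0 ≤ z j then 0 else A i j * z j with hcdef
  have hcle : ∀ i, c i ≤ 0 := by
    intro i
    refine Finset.sum_nonpos fun j _ => ?_
    by_cases h : 0 ≤ z j
    · rw [if_pos h]
    · rw [if_neg h]
      exact mul_nonpos_of_nonneg_of_nonpos (hApos i j) (not_le.mp h).le
  set a' : ℝ := ∑ j, if j ∈ P then v j * z j else 0 with ha'def
  set b' : ℝ := ∑ j, if j ∈ Sset ∧ j ∉ P then v j * z j else 0 with hb'def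
  have ha'nn : 0 ≤ a' := by
    refine Finset.sum_nonneg fun j _ => ?_
    by_cases h : j ∈ P
    · rw [if_pos h]
      exact mul_nonneg (hvpos j) ((hmemS j).mp (hPsub h))
    · rw [if_neg h]
  have hb'nn : 0 ≤ b' := by
    refine Finset.sum_nonneg fun j _ => ?_
    by_cases h : j ∈ Sset ∧ j ∉ P
    · rw [if_pos h]
      exact mul_nonneg (hvpos j) ((hmemS j).mp h.1)
    · rw [if_neg h]
  set α : ℝ := if a' = 0 then 1 else b' with hαdef
  set β : ℝ := if a' = 0 then 0 else a' with hβdef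
  have hαnn : 0 ≤ α := by
    rw [hαdef]; split
    · exact zero_le_one
    · exact hb'nn
  have hβnn : 0 ≤ β := by
    rw [hβdef]; split
    · exact le_refl 0
    · exact ha'nn
  have hαβ : α * a' = β * b' := by
    by_cases h : a' = 0 <;> simp [hαdef, hβdef, h, mul_comm]
  set w : Fin n → ℝ :=
    fun i => if i ∈ P then α * z i else if 0 ≤ z i then -(β * z i) else 0 with hwdef
  have hwP : ∀ i, i ∈ P → w i = α * z i := fun i hi => if_pos hi
  have hwQ : ∀ i, i ∈ Sset → i ∉ P → w i = -(β * z i) := by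
    intro i hiS hiP
    rw [hwdef]
    simp only
    rw [if_neg hiP, if_pos ((hmemS i).mp hiS)]
  have hwO : ∀ i, i ∉ Sset → w i = 0 := by
    intro i hiS
    rw [hwdef]
    simp only
    rw [if_neg (fun h => hiS (hPsub h)), if_neg (fun h => hiS ((hmemS i).mpr h))]
  have hvw : v ⬝ᵥ w = 0 := by
    have key : v ⬝ᵥ w = α * a' - β * b' := by
      simp only [dotProduct, ha'def, hb'def]
      rw [Finset.mul_sum, Finset.mul_sum, ← Finset.sum_sub_distrib]
      refine Finset.sum_congr rfl fun j _ => ?_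
      by_cases hj : j ∈ P
      · rw [hwP j hj, if_pos hj, if_neg (fun h => h.2 hj)]
        ring
      · by_cases hjS : j ∈ Sset
        · rw [hwQ j hjS hj, if_neg hj, if_pos ⟨hjS, hj⟩]
          ring
        · rw [hwO j hjS, if_neg hj, if_neg (fun h => hjS h.1)]
          ring
    rw [key, hαβ, sub_self]
  set D : Fin n → ℝ := fun i => m * z i + s i - c i with hDdef
  have hDc : ∀ i, 0 ≤ s i - c i := fun i => by have := hs i; have := hcle i; linarith
  -- mulVec formulas on P and on Sset \ P
  have hmv : ∀ (u : Fin n → ℝ) (i : Fin n), ((A + W) *ᵥ u) i = ∑ j, (A + W) i j * u j :=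
    fun u i => rfl
  have hBwP : ∀ i ∈ P, ((A + W) *ᵥ w) i = α * D i := by
    intro i hiP
    have hiS := hPsub hiP
    have key : ∀ j, (A + W) i j * w j
        = α * ((A + W) i j * z j - (if 0 ≤ z j then 0 else A i j * z j)) := by
      intro j
      by_cases hjP : j ∈ P
      · rw [hwP j hjP, if_pos ((hmemS j).mp (hPsub hjP))]
        ring
      · by_cases hjS : j ∈ Sset
        · have hij : i ≠ j := fun h => hjP (h ▸ hiP)
          rw [hwQ j hjS hjP, if_pos ((hmemS j).mp hjS), Matrix.add_apply,
            hedge i hiP j hjS hjP, hW hij]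
          ring
        · have hij : i ≠ j := fun h => hjS (h ▸ hiS)
          rw [hwO j hjS, if_neg (fun h => hjS ((hmemS j).mpr h)), Matrix.add_apply, hW hij]
          ring
    rw [hmv w i]
    calc (∑ j, (A + W) i j * w j)
        = ∑ j, α * ((A + W) i j * z j - (if 0 ≤ z j then 0 else A i j * z j)) :=
          Finset.sum_congr rfl fun j _ => key j
      _ = α * (((A + W) *ᵥ z) i - c i) := by
          rw [← Finset.mul_sum, Finset.sum_sub_distrib, hmv z i, hcdef]
      _ = α * D i := by rw [hBz i, hDdef]
  have hBwQ : ∀ i, i ∈ Sset → i ∉ P → ((A + W) *ᵥ w) i = -(β * D i) := by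
    intro i hiS hiP
    have key : ∀ j, (A + W) i j * w j
        = -β * ((A + W) i j * z j - (if 0 ≤ z j then 0 else A i j * z j)) := by
      intro j
      by_cases hjP : j ∈ P
      · have hij : i ≠ j := fun h => hiP (h ▸ hjP)
        have hAij : A i j = 0 := by
          rw [hAsym i j]
          exact hedge j hjP i hiS hiP
        rw [hwP j hjP, if_pos ((hmemS j).mp (hPsub hjP)), Matrix.add_apply, hAij, hW hij]
        ring
      · by_cases hjS : j ∈ Sset
        · rw [hwQ j hjS hjP, if_pos ((hmemS j).mp hjS)]
          ring
        · have hij : i ≠ j := fun h => hjS (h ▸ hiS)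
          rw [hwO j hjS, if_neg (fun h => hjS ((hmemS j).mpr h)), Matrix.add_apply, hW hij]
          ring
    rw [hmv w i]
    calc (∑ j, (A + W) i j * w j)
        = ∑ j, -β * ((A + W) i j * z j - (if 0 ≤ z j then 0 else A i j * z j)) :=
          Finset.sum_congr rfl fun j _ => key j
      _ = -β * (((A + W) *ᵥ z) i - c i) := by
          rw [← Finset.mul_sum, Finset.sum_sub_distrib, hmv z i, hcdef]
      _ = -(β * D i) := by rw [hBz i, hDdef]; ring
  -- Rayleigh chain
  have hq1 : ∀ i, m * (w i * w i) ≤ w i * ((A + W) *ᵥ w) i := by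
    intro i
    by_cases hiP : i ∈ P
    · rw [hwP i hiP, hBwP i hiP]
      have hzi := (hmemS i).mp (hPsub hiP)
      have h1 := hDc i
      have hD : D i = m * z i + (s i - c i) := by rw [hDdef]; ring
      rw [hD]
      nlinarith [mul_nonneg (mul_nonneg (mul_nonneg hαnn hαnn) hzi) h1]
    · by_cases hiS : i ∈ Sset
      · rw [hwQ i hiS hiP, hBwQ i hiS hiP]
        have hzi := (hmemS i).mp hiS
        have h1 := hDc i
        have hD : D i = m * z i + (s i - c i) := by rw [hDdef]; ring
        rw [hD]
        nlinarith [mul_nonneg (mul_nonneg (mul_nonneg hβnn hβnn) hzi) h1]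
      · rw [hwO i hiS]
        simp
  have hle2 : m * (w ⬝ᵥ w) ≤ w ⬝ᵥ ((A + W) *ᵥ w) := by
    simp only [dotProduct]
    rw [Finset.mul_sum]
    exact Finset.sum_le_sum fun i _ => hq1 i
  have hMw : w ⬝ᵥ (M *ᵥ w) = w ⬝ᵥ ((A + W) *ᵥ w) := by
    rw [hMdef, sub_mulVec, smul_mulVec, dotProduct_sub, dotProduct_smul, hvv w,
      ModHelper.dot_scaled w v (v ⬝ᵥ w), hvw]
    simp
  have hub2 := ModHelper.rayleigh_le hM w
  rw [← hmdef] at hub2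
  have heq : w ⬝ᵥ (M *ᵥ w) = m * (w ⬝ᵥ w) := le_antisymm hub2 (by rw [hMw]; exact hle2)
  have heig : M *ᵥ w = m • w := by
    have := ModHelper.eigen_of_rayleigh_eq hM w (by rw [← hmdef]; exact heq)
    rw [← hmdef] at this
    exact this
  have hBweig : ∀ i, ((A + W) *ᵥ w) i = m * w i := by
    intro i
    have h1 : (A + W) *ᵥ w = M *ᵥ w + σ • ((vecMulVec v v) *ᵥ w) := by
      rw [hMdef, sub_mulVec, smul_mulVec, sub_add_cancel]
    rw [h1, heig, hvv w]
    simp [hvw]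
  -- extract: on the relevant piece, c i = 0
  have hczero : ∀ i, c i = 0 → ∀ j, j ∉ Sset → A i j = 0 := by
    intro i hci j hjS
    have hterms : ∀ j' ∈ Finset.univ, (if 0 ≤ z j' then 0 else A i j' * z j') ≤ 0 := by
      intro j' _
      by_cases h : 0 ≤ z j'
      · rw [if_pos h]
      · rw [if_neg h]
        exact mul_nonpos_of_nonneg_of_nonpos (hApos i j') (not_le.mp h).le
    have h0 := (Finset.sum_eq_zero_iff_of_nonpos hterms).mp hci j (Finset.mem_univ j)
    have hzj : ¬ 0 ≤ z j := fun h => hjS ((hmemS j).mpr h)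
    rw [if_neg hzj] at h0
    rcases mul_eq_zero.mp h0 with h | h
    · exact h
    · exact absurd h (ne_of_lt (not_le.mp hzj))
  by_cases ha0 : a' = 0
  · -- use the set P
    have hα1 : α = 1 := by rw [hαdef, if_pos ha0]
    have hcl : ∀ i ∈ P, ∀ j, j ∉ P → A i j = 0 := by
      intro i hiP j hjP
      by_cases hjS : j ∈ Sset
      · exact hedge i hiP j hjS hjP
      · have h1 := hBwP i hiP
        have h2 := hBweig i
        have h3 := hwP i hiP
        rw [hα1, one_mul] at h1 h3
        have hDi : D i = m * z i + s i - c i := by rw [hDdef]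
        have hci : c i = 0 := by
          have := hs i
          have := hcle i
          rw [h1, hDi] at h2
          rw [h3] at h2
          linarith
        exact hczero i hci j hjS
    exact ModHelper.no_closed_set hAirr P hua hub hcl
  · -- use the set Sset \ P
    have hβval : β = a' := by rw [hβdef, if_neg ha0]
    have hβpos : 0 < β := by
      rw [hβval]
      exact lt_of_le_of_ne ha'nn (Ne.symm ha0)
    set Q : Set (Fin n) := {i | i ∈ Sset ∧ i ∉ P} with hQdef
    have hubQ : (ub : Fin n) ∈ Q := ⟨ub.2, hub⟩
    have huaQ : (ua : Fin n) ∉ Q := fun h => h.2 hua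
    have hcl : ∀ i ∈ Q, ∀ j, j ∉ Q → A i j = 0 := by
      intro i hiQ j hjQ
      obtain ⟨hiS, hiP⟩ := hiQ
      by_cases hjS : j ∈ Sset
      · have hjP : j ∈ P := by
          by_contra hjP
          exact hjQ ⟨hjS, hjP⟩
        rw [hAsym i j]
        exact hedge j hjP i hiS hiP
      · have h1 := hBwQ i hiS hiP
        have h2 := hBweig i
        have h3 := hwQ i hiS hiP
        have hDi : D i = m * z i + s i - c i := by rw [hDdef]
        have hci : c i = 0 := by
          have := hs i
          have := hcle i
          rw [h1, hDi] at h2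
          rw [h3] at h2
          have h4 : β * (s i - c i) = 0 := by linarith
          have h5 : s i - c i = 0 := by
            rcases mul_eq_zero.mp h4 with h | h
            · exact absurd h (ne_of_gt hβpos)
            · exact h
          linarith
        exact hczero i hci j hjS
    exact ModHelper.no_closed_set hAirr Q hubQ huaQ hcl
end

section
/- Let m ≥ 2 be an integer and n = m+1. Let A be the n×n matrix with A_{ii} = √m for all i, A_{1j} = A_{j1} = 1 for j = 2,…,n, and all other entries zero (the star graph on n nodes with a loop of weight √m on every node), and let M_NG = A − (1/vol G)·d·dᵀ be its Newman–Girvan modularity matrix. Then every vector x ∈ ℝⁿ with x₁ = 0 and Σ_{j=2}^n xⱼ = 0 satisfies M_NG x = √m · x; moreover √m is the largest eigenvalue of M_NG and it has multiplicity exactly m−1, and every eigenvector of M_NG associated with √m is a zero-sum vector vanishing at the star center (i.e., satisfies x₁ = 0 and Σⱼ xⱼ = 0). -/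
open Matrix BigOperators

/-- The multiplicity of `μ` as an eigenvalue of the real symmetric matrix `X`. -/
noncomputable def eigMult {n : ℕ} (X : Matrix (Fin n) (Fin n) ℝ) (hX : X.IsHermitian)
    (μ : ℝ) : ℕ :=
  (Finset.univ.filter (fun i => hX.eigenvalues i = μ)).card

theorem stmt6 (m : ℕ) (hm : 2 ≤ m)
    (A : Matrix (Fin (m + 1)) (Fin (m + 1)) ℝ)
    (hAdef : A = fun i j =>
      if i = j then Real.sqrt m else if i = 0 ∨ j = 0 then 1 else 0)
    (d : Fin (m + 1) → ℝ) (hd : d = A *ᵥ (fun _ => 1))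
    (volG : ℝ) (hvolG : volG = ∑ i, d i)
    (M : Matrix (Fin (m + 1)) (Fin (m + 1)) ℝ)
    (hMdef : M = A - volG⁻¹ • vecMulVec d d)
    (hM : M.IsHermitian) :
    (∀ x : Fin (m + 1) → ℝ, x 0 = 0 → (∑ j, x j) = 0 →
        M *ᵥ x = Real.sqrt m • x) ∧
    lam1 M hM = Real.sqrt m ∧
    eigMult M hM (Real.sqrt m) = m - 1 ∧
    (∀ x : Fin (m + 1) → ℝ, x ≠ 0 → M *ᵥ x = Real.sqrt m • x →
        x 0 = 0 ∧ (∑ j, x j) = 0) := by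
  classical
  set s : ℝ := Real.sqrt m with hs
  have hm0 : (0:ℝ) ≤ (m:ℝ) := Nat.cast_nonneg m
  have hmpos : (0:ℝ) < (m:ℝ) := by exact_mod_cast (by omega : 0 < m)
  have hss : s * s = (m:ℝ) := Real.mul_self_sqrt hm0
  have hspos : 0 < s := Real.sqrt_pos.mpr hmpos
  have hsne : s ≠ 0 := ne_of_gt hspos
  -- the general mulVec formula for A
  have hAx : ∀ (x : Fin (m+1) → ℝ) (i : Fin (m+1)), (A *ᵥ x) i =
      s * x i + (if i = 0 then ((∑ j, x j) - x 0) else 0)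
        + (if i = 0 then 0 else 1) * x 0 := by
    intro x i
    have hsplit : ∀ j, A i j = (if j = i then s else 0)
        + (if i = 0 then (if j = 0 then 0 else 1) else 0)
        + (if j = 0 then (if i = 0 then 0 else 1) else 0) := by
      intro j
      rw [hAdef]
      by_cases hij : i = j <;> by_cases hi : i = 0 <;> by_cases hj : j = 0 <;>
        simp_all [eq_comm (a := j) (b := i)] <;> tauto
    simp only [mulVec, dotProduct]
    rw [Finset.sum_congr rfl fun j _ => by rw [hsplit j]]
    simp only [add_mul]
    rw [Finset.sum_add_distrib, Finset.sum_add_distrib]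
    congr 1
    · congr 1
      · rw [Finset.sum_congr rfl (fun j _ => by rw [ite_mul, zero_mul]),
          Finset.sum_ite_eq' Finset.univ i (fun j => s * x j)]
        simp
      · by_cases hi : i = 0
        · simp only [hi, if_true]
          have : ∀ j : Fin (m+1), (if j = (0:Fin (m+1)) then (0:ℝ) else 1) * x j
              = x j - (if j = 0 then x j else 0) := by
            intro j; by_cases hj : j = 0 <;> simp [hj]
          rw [Finset.sum_congr rfl fun j _ => this j, Finset.sum_sub_distrib,
            Finset.sum_ite_eq' Finset.univ (0 : Fin (m+1)) x]
          simp
        · simp [hi]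
    · rw [Finset.sum_congr rfl (fun j _ => by rw [ite_mul, zero_mul]),
        Finset.sum_ite_eq' Finset.univ (0 : Fin (m+1)) (fun j => (if i = 0 then (0:ℝ) else 1) * x j)]
      simp
  -- d explicitly
  have hdi : ∀ i, d i = if i = 0 then s + m else s + 1 := by
    intro i
    rw [hd, hAx (fun _ => 1) i]
    by_cases hi : i = 0 <;> simp [hi, Finset.card_univ]
  -- dot product with d
  have hdx : ∀ x : Fin (m+1) → ℝ, d ⬝ᵥ x = (s+1) * (∑ j, x j) + ((m:ℝ)-1) * x 0 := by
    intro x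
    simp only [dotProduct]
    have : ∀ i, d i * x i = (s+1) * x i + (if i = 0 then ((m:ℝ)-1) * x i else 0) := by
      intro i; rw [hdi i]; by_cases hi : i = 0 <;> simp [hi] <;> ring
    rw [Finset.sum_congr rfl fun i _ => this i, Finset.sum_add_distrib,
      Finset.sum_ite_eq' Finset.univ (0 : Fin (m+1)) (fun i => ((m:ℝ)-1) * x i),
      ← Finset.mul_sum]
    simp
  -- volume
  have hvol : volG = s * (s+1)^2 := by
    have h1 : (∑ i, d i) = d ⬝ᵥ (fun _ => 1) := by simp [dotProduct]
    rw [hvolG, h1, hdx]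
    simp [Finset.card_univ]
    rw [← hss]; ring
  have hvpos : 0 < volG := by rw [hvol]; positivity
  have hvne : volG ≠ 0 := ne_of_gt hvpos
  -- mulVec formula for M
  have hMx : ∀ (x : Fin (m+1) → ℝ) (i : Fin (m+1)),
      (M *ᵥ x) i = (A *ᵥ x) i - volG⁻¹ * (d ⬝ᵥ x) * d i := by
    intro x i
    rw [hMdef]
    simp only [sub_mulVec, Pi.sub_apply, smul_mulVec, Pi.smul_apply, smul_eq_mul]
    congr 1
    simp only [mulVec, dotProduct, vecMulVec_apply]
    have h : (∑ j, d i * d j * x j) = d i * ∑ j, d j * x j := by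
      rw [Finset.mul_sum]; exact Finset.sum_congr rfl fun j _ => by ring
    rw [h]; ring
  -- M kills the all-ones vector
  have hM1 : M *ᵥ (fun _ => (1:ℝ)) = 0 := by
    funext i
    rw [hMx]
    have h1 : d ⬝ᵥ (fun _ => (1:ℝ)) = volG := by
      rw [hvolG]; simp [dotProduct]
    have h2 : (A *ᵥ fun _ => (1:ℝ)) i = d i := by rw [hd]
    rw [h1, h2, inv_mul_cancel₀ hvne]
    simp
  -- the center indicator vector
  set e0 : Fin (m+1) → ℝ := fun i => if i = 0 then 1 else 0 with he0
  have hsum_e0 : (∑ j, e0 j) = 1 := by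
    rw [he0]; rw [Finset.sum_ite_eq' Finset.univ (0 : Fin (m+1)) (fun _ => (1:ℝ))]; simp
  have hde0 : d ⬝ᵥ e0 = s + m := by
    have h0 : e0 0 = 1 := by simp [he0]
    rw [hdx, hsum_e0, h0]; ring
  have hMe0 : M *ᵥ e0 = 0 := by
    funext i
    rw [hMx, hAx, hde0, hdi]
    by_cases hi : i = 0
    · simp only [hi, if_true, hsum_e0, he0, if_true]
      have : (s + (m:ℝ)) * (s + m) = s * volG := by rw [hvol, ← hss]; ring
      simp only [Pi.zero_apply, Finset.sum_ite_eq', Finset.mem_univ, ↓reduceIte]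
      field_simp
      nlinarith [this]
    · simp only [hi, if_false, he0, Pi.zero_apply]
      have : (s + (m:ℝ)) * (s + 1) = volG := by rw [hvol, ← hss]; ring
      simp only [Pi.zero_apply, Finset.sum_ite_eq', Finset.mem_univ, ↓reduceIte]
      field_simp
      nlinarith [this]
  -- Part 1
  have part1 : ∀ x : Fin (m + 1) → ℝ, x 0 = 0 → (∑ j, x j) = 0 → M *ᵥ x = s • x := by
    intro x hx0 hxs
    funext i
    rw [hMx, hAx, hdx, hxs, hx0]
    by_cases hi : i = 0 <;> simp [hi, hx0] <;> ring
  -- decomposition of M - s•1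
  set u : Fin (m+1) → ℝ := fun j => (if j = 0 then (-1:ℝ) else 1) - ((m:ℝ)-1) * d j / volG with hu
  set v : Fin (m+1) → ℝ := fun j => (if j = 0 then (1:ℝ) else 0) - (s+1) * d j / volG with hv
  have hMij : ∀ i j, M i j = (if i = j then s else if i = 0 ∨ j = 0 then 1 else 0)
      - volG⁻¹ * ((if i = 0 then s + m else s + 1) * (if j = 0 then s + m else s + 1)) := by
    intro i j
    rw [hMdef]
    simp only [Matrix.sub_apply, Matrix.smul_apply, vecMulVec_apply, smul_eq_mul]
    simp only [hAdef]
    rw [hdi i, hdi j]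
  have hC : M - s • (1 : Matrix (Fin (m+1)) (Fin (m+1)) ℝ)
      = vecMulVec e0 u + vecMulVec (fun _ => (1:ℝ)) v := by
    ext i j
    rw [Matrix.sub_apply, Matrix.smul_apply, Matrix.one_apply, Matrix.add_apply,
      vecMulVec_apply, vecMulVec_apply, hMij i j]
    simp only [hu, hv, he0, smul_eq_mul]
    rw [hdi j]
    by_cases hi : i = 0 <;> by_cases hj : j = 0 <;> by_cases hij : i = j <;>
      simp only [hi, hj, hij, if_true, if_false, eq_self_iff_true, or_true, true_or,
        or_self, not_true, not_false_iff, one_mul, zero_mul,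
        @eq_comm (Fin (m+1)) 0] <;>
      field_simp <;> ring
  have hMvmv : ∀ (a b : Fin (m+1) → ℝ), M * vecMulVec a b = vecMulVec (M *ᵥ a) b := by
    intro a b; ext i j
    simp only [Matrix.mul_apply, vecMulVec_apply, mulVec, dotProduct, Finset.sum_mul]
    exact Finset.sum_congr rfl fun k _ => (mul_assoc _ _ _).symm
  have hM2 : M * M = s • M := by
    have h0 : M * (M - s • 1) = 0 := by
      rw [hC, Matrix.mul_add, hMvmv, hMvmv, hMe0, hM1]
      ext i j; simp [vecMulVec_apply]
    rw [Matrix.mul_sub, Matrix.mul_smul, Matrix.mul_one, sub_eq_zero] at h0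
    exact h0
  -- trace of M
  have htr : M.trace = ((m:ℝ) - 1) * s := by
    have h1 : M.trace = ∑ i, (s - volG⁻¹ * (d i * d i)) := by
      rw [Matrix.trace]
      apply Finset.sum_congr rfl; intro i _
      rw [Matrix.diag]
      rw [hMdef]
      simp [Matrix.sub_apply, vecMulVec_apply]
      simp [hAdef]
    have h2 : (∑ i, (d i * d i)) = d ⬝ᵥ d := rfl
    have h3 : d ⬝ᵥ d = (s+1) * volG + ((m:ℝ)-1) * (s + m) := by
      rw [hdx, ← hvolG, hdi]; simp
    rw [h1, Finset.sum_sub_distrib, ← Finset.mul_sum, h2, h3, Finset.sum_const,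
      Finset.card_univ, Fintype.card_fin, nsmul_eq_mul]
    push_cast
    rw [hvol, ← hss]
    field_simp
    ring
  -- eigenvalue dichotomy
  have heig : ∀ i, hM.eigenvalues i = 0 ∨ hM.eigenvalues i = s := by
    intro i
    have hv' := hM.mulVec_eigenvectorBasis i
    have hvne0 : ⇑(hM.eigenvectorBasis i) ≠ 0 :=
      by intro h; apply hM.eigenvectorBasis.orthonormal.ne_zero i; ext j; simpa using congrFun h j
    have l : (M*M) *ᵥ ⇑(hM.eigenvectorBasis i)
        = (hM.eigenvalues i * hM.eigenvalues i) • ⇑(hM.eigenvectorBasis i) := by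
      rw [← Matrix.mulVec_mulVec, hv', Matrix.mulVec_smul, hv', smul_smul]
    have r : (M*M) *ᵥ ⇑(hM.eigenvectorBasis i)
        = (s * hM.eigenvalues i) • ⇑(hM.eigenvectorBasis i) := by
      rw [hM2, Matrix.smul_mulVec, hv', smul_smul]
    have h3 : (hM.eigenvalues i * hM.eigenvalues i - s * hM.eigenvalues i)
        • ⇑(hM.eigenvectorBasis i) = 0 := by
      rw [sub_smul, ← l, r, sub_self]
    rcases smul_eq_zero.mp h3 with h | h
    · have h4 : hM.eigenvalues i * (hM.eigenvalues i - s) = 0 := by linear_combination h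
      rcases mul_eq_zero.mp h4 with h5 | h5
      · exact Or.inl h5
      · exact Or.inr (by linarith)
    · exact absurd h hvne0
  -- trace equals sum of eigenvalues
  have htr2 : M.trace = ∑ i, hM.eigenvalues i := by
    conv_lhs => rw [hM.spectral_theorem, Unitary.conjStarAlgAut_apply]
    rw [Matrix.trace_mul_cycle]
    have hU : (star (hM.eigenvectorUnitary : Matrix (Fin (m+1)) (Fin (m+1)) ℝ)) *
        (hM.eigenvectorUnitary : Matrix (Fin (m+1)) (Fin (m+1)) ℝ) = 1 :=
      Matrix.UnitaryGroup.star_mul_self _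
    rw [hU, Matrix.one_mul, Matrix.trace_diagonal]
    simp
  -- the multiplicity count
  set P := Finset.univ.filter (fun i => hM.eigenvalues i = s) with hP
  have hsumP : ∑ i, hM.eigenvalues i = (P.card : ℝ) * s := by
    rw [← Finset.sum_filter_add_sum_filter_not Finset.univ (fun i => hM.eigenvalues i = s)]
    have h1 : ∑ i ∈ P, hM.eigenvalues i = (P.card : ℝ) * s := by
      rw [Finset.sum_congr rfl (fun i hi => (Finset.mem_filter.mp hi).2), Finset.sum_const,
        nsmul_eq_mul]
    have h2 : ∑ i ∈ Finset.univ.filter (fun i => ¬ hM.eigenvalues i = s), hM.eigenvalues i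
        = 0 := by
      apply Finset.sum_eq_zero; intro i hi
      rcases heig i with h|h
      · exact h
      · exact absurd h (Finset.mem_filter.mp hi).2
    rw [← hP, h1, h2, add_zero]
  have hcard : P.card = m - 1 := by
    have hR : (P.card : ℝ) * s = ((m:ℝ) - 1) * s := by rw [← hsumP, ← htr2, htr]
    have hcr : (P.card : ℝ) = (m:ℝ) - 1 := mul_right_cancel₀ hsne hR
    have h2 : ((m - 1 : ℕ) : ℝ) = (m:ℝ) - 1 := by
      rw [Nat.cast_sub (by omega : 1 ≤ m)]; norm_num
    exact_mod_cast hcr.trans h2.symm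
  have hPne : P.Nonempty := Finset.card_pos.mp (by rw [hcard]; omega)
  obtain ⟨i0, hi0⟩ := hPne
  have hi0s : hM.eigenvalues i0 = s := (Finset.mem_filter.mp hi0).2
  have hlam : lam1 M hM = s := by
    apply le_antisymm
    · apply ciSup_le; intro i
      rcases heig i with h|h
      · rw [h]; exact le_of_lt hspos
      · rw [h]
    · have hb := le_ciSup (f := fun i => hM.eigenvalues i) (Set.finite_range _).bddAbove i0
      rw [hi0s] at hb; exact hb
  -- symmetry of M entries
  have hMsym : ∀ i j, M i j = M j i := by
    intro i j
    have h := congrFun (congrFun hM i) j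
    simpa using h.symm
  -- part 4
  have part4 : ∀ x : Fin (m + 1) → ℝ, M *ᵥ x = s • x → x 0 = 0 ∧ (∑ j, x j) = 0 := by
    intro x hx
    have hrow0 : ∀ j, M 0 j = 0 := by
      intro j
      have h1 : (M *ᵥ e0) j = M j 0 := by
        simp only [mulVec, dotProduct, he0, mul_ite, mul_one, mul_zero]
        rw [Finset.sum_ite_eq' Finset.univ (0 : Fin (m+1)) (fun k => M j k)]
        simp
      rw [hMe0] at h1
      rw [hMsym]
      exact (h1.symm).trans rfl
    have hcolsum : ∀ j, (∑ i, M i j) = 0 := by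
      intro j
      have h1 : (M *ᵥ (fun _ => (1:ℝ))) j = ∑ i, M j i := by
        simp [mulVec, dotProduct]
      rw [hM1] at h1
      rw [Finset.sum_congr rfl (fun i _ => hMsym i j)]
      exact h1.symm.trans rfl
    constructor
    · have h := congrFun hx 0
      have h2 : (M *ᵥ x) 0 = ∑ j, M 0 j * x j := rfl
      rw [h2, Finset.sum_eq_zero (fun j _ => by rw [hrow0 j, zero_mul])] at h
      have : s * x 0 = 0 := by simpa using h.symm
      exact (mul_eq_zero.mp this).resolve_left hsne
    · have h := congrArg (fun y => ∑ i, y i) hx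
      have hL : ∑ i, (M *ᵥ x) i = ∑ j, (∑ i, M i j) * x j := by
        simp only [mulVec, dotProduct]
        rw [Finset.sum_comm]
        exact Finset.sum_congr rfl fun j _ => by rw [Finset.sum_mul]
      have hR : ∑ i, (s • x) i = s * ∑ j, x j := by
        simp [Finset.mul_sum]
      rw [hL, hR] at h
      rw [Finset.sum_eq_zero (fun j _ => by rw [hcolsum j, zero_mul])] at h
      exact ((mul_eq_zero.mp h.symm).resolve_left hsne)
  refine ⟨part1, hlam, ?_, fun x _ hx => part4 x hx⟩
  show (Finset.univ.filter (fun i => hM.eigenvalues i = s)).card = m - 1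
  rw [← hP]; exact hcard
end

section
/- Let M be an n×n generalized modularity matrix, let S₁,…,S_k (k ≥ 1) be pairwise disjoint nonempty subsets of {1,…,n}, and let C be the k×k symmetric matrix with entries C_{ij} = 𝟙_{S_i}ᵀ M 𝟙_{S_j}. Then the number of positive eigenvalues of M (counted with multiplicity) is at least the number of positive eigenvalues of C, and the number of nonnegative eigenvalues of M is at least the number of nonnegative eigenvalues of C. -/
open Matrix BigOperators

/-- The characteristic vector `𝟙_S` of a set of indices. -/
noncomputable def charVec {n : ℕ} (S : Finset (Fin n)) : Fin n → ℝ :=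
  fun i => if i ∈ S then 1 else 0

/-- The (joint) modularity `Q(S,T) = 𝟙_Sᵀ M 𝟙_T`; the modularity of `S` is `Q(S,S)`. -/
noncomputable def modQ {n : ℕ} (M : Matrix (Fin n) (Fin n) ℝ)
    (S T : Finset (Fin n)) : ℝ :=
  charVec S ⬝ᵥ (M *ᵥ charVec T)

/-- The number of positive eigenvalues (with multiplicity) of a real symmetric matrix. -/
noncomputable def posEigCount {n : ℕ} (X : Matrix (Fin n) (Fin n) ℝ)
    (hX : X.IsHermitian) : ℕ :=
  (Finset.univ.filter (fun i => 0 < hX.eigenvalues i)).card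

/-- The number of nonnegative eigenvalues (with multiplicity) of a real symmetric matrix. -/
noncomputable def nonnegEigCount {n : ℕ} (X : Matrix (Fin n) (Fin n) ℝ)
    (hX : X.IsHermitian) : ℕ :=
  (Finset.univ.filter (fun i => 0 ≤ hX.eigenvalues i)).card

namespace Stmt9Aux

/-- quadratic form via spectral decomposition -/
lemma quad_eq {m : ℕ} (X : Matrix (Fin m) (Fin m) ℝ) (hX : X.IsHermitian) (x : Fin m → ℝ) :
    x ⬝ᵥ X *ᵥ x =
      ∑ i, hX.eigenvalues i *
        ((star (hX.eigenvectorUnitary : Matrix (Fin m) (Fin m) ℝ) *ᵥ x) i) ^ 2 := by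
  set U := (hX.eigenvectorUnitary : Matrix (Fin m) (Fin m) ℝ) with hU
  have hstar : star U = Uᵀ := by
    rw [Matrix.star_eq_conjTranspose, Matrix.conjTranspose_eq_transpose_of_trivial]
  conv_lhs => rw [hX.spectral_theorem, Unitary.conjStarAlgAut_apply]
  rw [← hU, ← Matrix.mulVec_mulVec, ← Matrix.mulVec_mulVec, Matrix.dotProduct_mulVec x U,
    ← Matrix.mulVec_transpose, ← hstar]
  simp only [dotProduct, Matrix.mulVec_diagonal]
  refine Finset.sum_congr rfl fun i _ => ?_
  simp only [Function.comp, RCLike.ofReal_real_eq_id, id]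
  ring

lemma star_mulVec_eq_zero {m : ℕ} {X : Matrix (Fin m) (Fin m) ℝ} (hX : X.IsHermitian)
    {x : Fin m → ℝ}
    (h : star (hX.eigenvectorUnitary : Matrix (Fin m) (Fin m) ℝ) *ᵥ x = 0) : x = 0 := by
  set U := (hX.eigenvectorUnitary : Matrix (Fin m) (Fin m) ℝ) with hU
  have h1 : U * star U = 1 := Matrix.mem_unitaryGroup_iff.mp hX.eigenvectorUnitary.2
  have : U *ᵥ (star U *ᵥ x) = x := by
    rw [Matrix.mulVec_mulVec, h1, Matrix.one_mulVec]
  rw [← this, h, Matrix.mulVec_zero]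

/-- the coordinate restriction map -/
noncomputable def coordMap {m : ℕ} (U : Matrix (Fin m) (Fin m) ℝ) (p : Fin m → Prop) :
    (Fin m → ℝ) →ₗ[ℝ] ({i // p i} → ℝ) where
  toFun := fun x i => (star U *ᵥ x) i.1
  map_add' := by intro a b; funext i; simp [Matrix.mulVec_add]
  map_smul' := by intro r a; funext i; simp [Matrix.mulVec_smul]

/-- the extension-by-zero map -/
noncomputable def extMap {m : ℕ} (p : Fin m → Prop) [DecidablePred p] :
    ({i // p i} → ℝ) →ₗ[ℝ] (Fin m → ℝ) where
  toFun := fun c i => if h : p i then c ⟨i, h⟩ else 0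
  map_add' := by intro a b; funext i; by_cases h : p i <;> simp [h]
  map_smul' := by intro r a; funext i; by_cases h : p i <;> simp [h]

lemma extMap_injective {m : ℕ} (p : Fin m → Prop) [DecidablePred p] :
    Function.Injective (extMap p) := by
  intro a b hab
  funext i
  have := congrFun hab i.1
  simpa [extMap, i.2] using this

lemma le_posEigCount {m : ℕ} {ι : Type} [Fintype ι]
    (X : Matrix (Fin m) (Fin m) ℝ) (hX : X.IsHermitian)
    (f : (ι → ℝ) →ₗ[ℝ] (Fin m → ℝ))
    (hq : ∀ c, c ≠ 0 → 0 < f c ⬝ᵥ X *ᵥ f c) :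
    Fintype.card ι ≤ posEigCount X hX := by
  classical
  set U := (hX.eigenvectorUnitary : Matrix (Fin m) (Fin m) ℝ) with hU
  set g := coordMap U (fun i => 0 < hX.eigenvalues i) with hg
  have hinj : Function.Injective (g ∘ₗ f) := by
    rw [← LinearMap.ker_eq_bot, LinearMap.ker_eq_bot']
    intro c hc
    by_contra hne
    have hq' := hq c hne
    have hquad := quad_eq X hX (f c)
    have hle : f c ⬝ᵥ X *ᵥ f c ≤ 0 := by
      rw [hquad]
      apply Finset.sum_nonpos
      intro i _
      by_cases hpi : 0 < hX.eigenvalues i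
      · have h0 : (star U *ᵥ f c) i = 0 := congrFun hc ⟨i, hpi⟩
        rw [h0]; simp
      · exact mul_nonpos_of_nonpos_of_nonneg (le_of_not_gt hpi) (sq_nonneg _)
    linarith
  have hfin := LinearMap.finrank_le_finrank_of_injective hinj
  rw [Module.finrank_pi, Module.finrank_pi] at hfin
  simpa [posEigCount, Fintype.card_subtype] using hfin

lemma le_nonnegEigCount {m : ℕ} {ι : Type} [Fintype ι]
    (X : Matrix (Fin m) (Fin m) ℝ) (hX : X.IsHermitian)
    (f : (ι → ℝ) →ₗ[ℝ] (Fin m → ℝ)) (hf : Function.Injective f)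
    (hq : ∀ c, 0 ≤ f c ⬝ᵥ X *ᵥ f c) :
    Fintype.card ι ≤ nonnegEigCount X hX := by
  classical
  set U := (hX.eigenvectorUnitary : Matrix (Fin m) (Fin m) ℝ) with hU
  set g := coordMap U (fun i => 0 ≤ hX.eigenvalues i) with hg
  have hinj : Function.Injective (g ∘ₗ f) := by
    rw [← LinearMap.ker_eq_bot, LinearMap.ker_eq_bot']
    intro c hc
    by_contra hne
    have hfc : f c ≠ 0 := by
      intro h0
      exact hne (hf (by rw [h0, map_zero]))
    have hy : star U *ᵥ f c ≠ 0 := fun h0 => hfc (star_mulVec_eq_zero hX h0)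
    obtain ⟨i0, hi0⟩ : ∃ i0, (star U *ᵥ f c) i0 ≠ 0 := by
      by_contra hall
      push_neg at hall
      exact hy (funext hall)
    have hneg : hX.eigenvalues i0 < 0 := by
      by_contra hge
      push_neg at hge
      exact hi0 (congrFun hc ⟨i0, hge⟩)
    have hlt : f c ⬝ᵥ X *ᵥ f c < 0 := by
      rw [quad_eq X hX (f c)]
      have : ∑ i, hX.eigenvalues i * ((star U *ᵥ f c) i) ^ 2 < ∑ _i : Fin m, (0 : ℝ) := by
        apply Finset.sum_lt_sum
        · intro i _
          by_cases hpi : 0 ≤ hX.eigenvalues i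
          · have h0 : (star U *ᵥ f c) i = 0 := congrFun hc ⟨i, hpi⟩
            rw [h0]; simp
          · exact mul_nonpos_of_nonpos_of_nonneg (le_of_not_ge hpi) (sq_nonneg _)
        · refine ⟨i0, Finset.mem_univ _, ?_⟩
          have hsq : 0 < ((star U *ᵥ f c) i0) ^ 2 := by positivity
          exact mul_neg_of_neg_of_pos hneg hsq
      simpa using this
    exact absurd (hq c) (not_le.mpr hlt)
  have hfin := LinearMap.finrank_le_finrank_of_injective hinj
  rw [Module.finrank_pi, Module.finrank_pi] at hfin
  simpa [nonnegEigCount, Fintype.card_subtype] using hfin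

end Stmt9Aux

theorem stmt9 {n k : ℕ} (hk : 1 ≤ k) (A W M : Matrix (Fin n) (Fin n) ℝ)
    (hA : A.IsHermitian) (hApos : ∀ i j, 0 ≤ A i j) (hAirr : A.Irreducible)
    (hW : W.IsDiag) (v : Fin n → ℝ) (hv : v ≠ 0) (hvpos : ∀ i, 0 ≤ v i)
    (σ : ℝ) (hσ : 0 < σ)
    (hMdef : M = A + W - σ • vecMulVec v v) (hM : M.IsHermitian)
    (S : Fin k → Finset (Fin n)) (hSne : ∀ i, (S i).Nonempty)
    (hSdisj : ∀ i j, i ≠ j → Disjoint (S i) (S j))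
    (C : Matrix (Fin k) (Fin k) ℝ)
    (hCdef : C = fun i j => modQ M (S i) (S j))
    (hC : C.IsHermitian) :
    posEigCount C hC ≤ posEigCount M hM ∧
    nonnegEigCount C hC ≤ nonnegEigCount M hM := by
  classical
  open Stmt9Aux in
  -- the matrix of characteristic vectors
  set B : Matrix (Fin n) (Fin k) ℝ := fun j i => charVec (S i) j with hB
  -- C = Bᵀ M B
  have hCBMB : C = Bᵀ * M * B := by
    rw [hCdef]
    ext i j
    simp only [Matrix.mul_apply, Matrix.transpose_apply]
    simp only [modQ, dotProduct,
      Matrix.mulVec, hB]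
    simp only [Finset.mul_sum, Finset.sum_mul]
    rw [Finset.sum_comm]
    refine Finset.sum_congr rfl fun a _ => ?_
    refine Finset.sum_congr rfl fun b _ => ?_
    ring
  -- quadratic forms agree
  have hquadBC : ∀ x : Fin k → ℝ, (B *ᵥ x) ⬝ᵥ M *ᵥ (B *ᵥ x) = x ⬝ᵥ C *ᵥ x := by
    intro x
    rw [hCBMB, ← Matrix.mulVec_mulVec, ← Matrix.mulVec_mulVec,
      Matrix.dotProduct_mulVec x Bᵀ, Matrix.vecMul_transpose]
  -- B is injective
  have hBinj : ∀ x : Fin k → ℝ, B *ᵥ x = 0 → x = 0 := by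
    intro x hx
    funext i
    obtain ⟨j, hj⟩ := hSne i
    have hxj := congrFun hx j
    have : (B *ᵥ x) j = x i := by
      simp only [Matrix.mulVec, dotProduct, hB, charVec]
      rw [Finset.sum_eq_single i]
      · simp [hj]
      · intro b _ hbi
        have hnb : j ∉ S b :=
          Finset.disjoint_left.mp (hSdisj i b (Ne.symm hbi)) hj
        simp [hnb]
      · intro h; exact absurd (Finset.mem_univ i) h
    rw [this] at hxj
    simpa using hxj
  set V : Matrix (Fin k) (Fin k) ℝ := (hC.eigenvectorUnitary : Matrix (Fin k) (Fin k) ℝ)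
    with hV
  have hVinj : ∀ x : Fin k → ℝ, V *ᵥ x = 0 → x = 0 := by
    intro x hx
    have h1 : star V * V = 1 :=
      (Matrix.mem_unitaryGroup_iff'.mp hC.eigenvectorUnitary.2)
    have : star V *ᵥ (V *ᵥ x) = x := by
      rw [Matrix.mulVec_mulVec, h1, Matrix.one_mulVec]
    rw [← this, hx, Matrix.mulVec_zero]
  have hstarV : ∀ w : Fin k → ℝ, star V *ᵥ (V *ᵥ w) = w := by
    intro w
    have h1 : star V * V = 1 :=
      (Matrix.mem_unitaryGroup_iff'.mp hC.eigenvectorUnitary.2)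
    rw [Matrix.mulVec_mulVec, h1, Matrix.one_mulVec]
  -- quadratic form of C on extended coordinate vectors
  have hquadC : ∀ (p : Fin k → Prop) [DecidablePred p] (c : {i // p i} → ℝ),
      (V *ᵥ extMap p c) ⬝ᵥ C *ᵥ (V *ᵥ extMap p c) =
        ∑ i, hC.eigenvalues i * (extMap p c i) ^ 2 := by
    intro p _ c
    rw [quad_eq C hC (V *ᵥ extMap p c), ← hV, hstarV]
  constructor
  · -- positive eigenvalues
    set p : Fin k → Prop := fun i => 0 < hC.eigenvalues i with hp
    set f : ({i // p i} → ℝ) →ₗ[ℝ] (Fin n → ℝ) :=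
      B.mulVecLin ∘ₗ V.mulVecLin ∘ₗ extMap p with hf
    have hq : ∀ c, c ≠ 0 → 0 < f c ⬝ᵥ M *ᵥ f c := by
      intro c hcne
      have hfc : f c = B *ᵥ (V *ᵥ extMap p c) := rfl
      rw [hfc, hquadBC, hquadC p c]
      obtain ⟨i0, hi0⟩ : ∃ i0, c i0 ≠ 0 := by
        by_contra hall; push_neg at hall; exact hcne (funext hall)
      have : ∑ _i : Fin k, (0 : ℝ) < ∑ i, hC.eigenvalues i * (extMap p c i) ^ 2 := by
        apply Finset.sum_lt_sum
        · intro i _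
          by_cases hpi : p i
          · have : extMap p c i = c ⟨i, hpi⟩ := by simp [extMap, hpi]
            rw [this]
            exact mul_nonneg (le_of_lt hpi) (sq_nonneg _)
          · have : extMap p c i = 0 := by simp [extMap, hpi]
            rw [this]; simp
        · refine ⟨i0.1, Finset.mem_univ _, ?_⟩
          have : extMap p c i0.1 = c i0 := by simp [extMap, i0.2]
          rw [this]
          have hsq : 0 < (c i0) ^ 2 := by positivity
          exact mul_pos i0.2 hsq
      simpa using this
    have := le_posEigCount M hM f hq
    rwa [Fintype.card_subtype] at this
  · -- nonnegative eigenvalues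
    set p : Fin k → Prop := fun i => 0 ≤ hC.eigenvalues i with hp
    set f : ({i // p i} → ℝ) →ₗ[ℝ] (Fin n → ℝ) :=
      B.mulVecLin ∘ₗ V.mulVecLin ∘ₗ extMap p with hf
    have hfinj : Function.Injective f := by
      rw [← LinearMap.ker_eq_bot, LinearMap.ker_eq_bot']
      intro c hc
      have h1 : V *ᵥ extMap p c = 0 := hBinj _ hc
      have h2 : extMap p c = 0 := hVinj _ h1
      exact extMap_injective p (by rw [h2, map_zero])
    have hq : ∀ c, 0 ≤ f c ⬝ᵥ M *ᵥ f c := by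
      intro c
      have hfc : f c = B *ᵥ (V *ᵥ extMap p c) := rfl
      rw [hfc, hquadBC, hquadC p c]
      apply Finset.sum_nonneg
      intro i _
      by_cases hpi : p i
      · exact mul_nonneg hpi (sq_nonneg _)
      · have : extMap p c i = 0 := by simp [extMap, hpi]
        rw [this]; simp
    have := le_nonnegEigCount M hM f hfinj hq
    rwa [Fintype.card_subtype] at this
end

section
/- Let M be an n×n generalized modularity matrix and let S₁,…,S_k (k ≥ 1) be pairwise disjoint nonempty subsets of {1,…,n} such that Q(S_i) > 0 for all i and Q(S_i, S_j) < 0 for all i ≠ j. If there exist positive real numbers α₁,…,α_k such that α_i·Q(S_i) > Σ_{j≠i} α_j·|Q(S_i,S_j)| for every i, then M has at least k positive eigenvalues (counted with multiplicity). -/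
open Matrix BigOperators

section AuxLemmas

open Finset

private lemma dd_pos' {k : ℕ} (B : Fin k → Fin k → ℝ) (hsym : ∀ i j, B i j = B j i)
    (α : Fin k → ℝ) (hα : ∀ i, 0 < α i)
    (hdom : ∀ i, (∑ j ∈ Finset.univ.erase i, α j * |B i j|) < α i * B i i)
    (c : Fin k → ℝ) (hc : c ≠ 0) :
    0 < ∑ i, ∑ j, c i * c j * B i j := by
  set y : Fin k → ℝ := fun i => c i / α i with hy
  set C : Fin k → Fin k → ℝ := fun i j => α i * α j * B i j with hC
  have hCsym : ∀ i j, C i j = C j i := by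
    intro i j
    show α i * α j * B i j = α j * α i * B j i
    rw [hsym i j]; ring
  have hceq : ∀ i, c i = α i * y i := by
    intro i
    show c i = α i * (c i / α i)
    rw [mul_comm]
    exact (div_mul_cancel₀ _ (hα i).ne').symm
  have hgap : ∀ i, (∑ j ∈ Finset.univ.erase i, |C i j|) < C i i := by
    intro i
    have h1 : (∑ j ∈ Finset.univ.erase i, |C i j|)
        = α i * ∑ j ∈ Finset.univ.erase i, α j * |B i j| := by
      rw [Finset.mul_sum]
      refine Finset.sum_congr rfl fun j _ => ?_
      show |α i * α j * B i j| = α i * (α j * |B i j|)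
      rw [abs_mul, abs_mul, abs_of_pos (hα i), abs_of_pos (hα j)]; ring
    have h2 : C i i = α i * (α i * B i i) := by show α i * α i * B i i = _; ring
    rw [h1, h2]
    exact mul_lt_mul_of_pos_left (hdom i) (hα i)
  have hyne : y ≠ 0 := by
    intro h0
    apply hc
    funext i
    simp [hceq i, congrFun h0 i]
  have hrw : (∑ i, ∑ j, c i * c j * B i j) = ∑ i, ∑ j, y i * y j * C i j := by
    refine Finset.sum_congr rfl fun i _ => Finset.sum_congr rfl fun j _ => ?_
    rw [hceq i, hceq j]
    show α i * y i * (α j * y j) * B i j = y i * y j * (α i * α j * B i j)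
    ring
  rw [hrw]
  have swap : (∑ i, ∑ j ∈ Finset.univ.erase i, |C i j| * y j ^ 2 / 2)
      = ∑ i, ∑ j ∈ Finset.univ.erase i, |C i j| * y i ^ 2 / 2 := by
    rw [Finset.sum_comm' (t' := Finset.univ) (s' := fun j => Finset.univ.erase j)
      (by intro i j; simp [eq_comm, ne_comm, Ne])]
    refine Finset.sum_congr rfl fun j _ => Finset.sum_congr rfl fun i _ => ?_
    rw [hCsym]
  have key : (∑ i, y i ^ 2 * (C i i - ∑ j ∈ Finset.univ.erase i, |C i j|))
      ≤ ∑ i, ∑ j, y i * y j * C i j := by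
    have split : (∑ i, ∑ j, y i * y j * C i j)
        = (∑ i, y i * y i * C i i) + ∑ i, ∑ j ∈ Finset.univ.erase i, y i * y j * C i j := by
      rw [← Finset.sum_add_distrib]
      refine Finset.sum_congr rfl fun i _ => ?_
      rw [← Finset.add_sum_erase _ _ (Finset.mem_univ i)]
    rw [split]
    have hD : -(∑ i, ∑ j ∈ Finset.univ.erase i, |C i j| * y i ^ 2)
        ≤ ∑ i, ∑ j ∈ Finset.univ.erase i, y i * y j * C i j := by
      have hE : (∑ i, ∑ j ∈ Finset.univ.erase i, |C i j| * y i ^ 2)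
          = ∑ i, ∑ j ∈ Finset.univ.erase i, |C i j| * (y i ^ 2 + y j ^ 2) / 2 := by
        have expand : ∀ i j : Fin k, |C i j| * (y i ^ 2 + y j ^ 2) / 2
            = |C i j| * y i ^ 2 / 2 + |C i j| * y j ^ 2 / 2 := fun i j => by ring
        calc (∑ i, ∑ j ∈ Finset.univ.erase i, |C i j| * y i ^ 2)
            = (∑ i, ∑ j ∈ Finset.univ.erase i, |C i j| * y i ^ 2 / 2)
              + ∑ i, ∑ j ∈ Finset.univ.erase i, |C i j| * y j ^ 2 / 2 := by
              rw [swap, ← Finset.sum_add_distrib]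
              refine Finset.sum_congr rfl fun i _ => ?_
              rw [← Finset.sum_add_distrib]
              refine Finset.sum_congr rfl fun j _ => ?_
              ring
          _ = ∑ i, ∑ j ∈ Finset.univ.erase i, |C i j| * (y i ^ 2 + y j ^ 2) / 2 := by
              rw [← Finset.sum_add_distrib]
              refine Finset.sum_congr rfl fun i _ => ?_
              rw [← Finset.sum_add_distrib]
              exact Finset.sum_congr rfl fun j _ => (expand i j).symm
      rw [hE, ← Finset.sum_neg_distrib]
      refine Finset.sum_le_sum fun i _ => ?_
      rw [← Finset.sum_neg_distrib]
      refine Finset.sum_le_sum fun j _ => ?_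
      have h1 : |y i * y j * C i j| ≤ |C i j| * (y i ^ 2 + y j ^ 2) / 2 := by
        rw [abs_mul, abs_mul]
        have hab : |y i| * |y j| ≤ (y i ^ 2 + y j ^ 2) / 2 := by
          nlinarith [sq_nonneg (|y i| - |y j|), sq_abs (y i), sq_abs (y j)]
        calc |y i| * |y j| * |C i j| ≤ ((y i ^ 2 + y j ^ 2) / 2) * |C i j| :=
              mul_le_mul_of_nonneg_right hab (abs_nonneg _)
          _ = |C i j| * (y i ^ 2 + y j ^ 2) / 2 := by ring
      linarith [neg_abs_le (y i * y j * C i j)]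
    have hsplit2 : (∑ i, y i ^ 2 * (C i i - ∑ j ∈ Finset.univ.erase i, |C i j|))
        = (∑ i, y i * y i * C i i) - ∑ i, ∑ j ∈ Finset.univ.erase i, |C i j| * y i ^ 2 := by
      rw [← Finset.sum_sub_distrib]
      refine Finset.sum_congr rfl fun i _ => ?_
      rw [mul_sub, Finset.mul_sum]
      congr 1
      · ring
      · exact Finset.sum_congr rfl fun j _ => by ring
    rw [hsplit2]
    linarith
  refine lt_of_lt_of_le ?_ key
  obtain ⟨i0, hi0⟩ : ∃ i, y i ≠ 0 := Function.ne_iff.mp hyne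
  refine Finset.sum_pos' (fun i _ => ?_) ⟨i0, Finset.mem_univ i0, ?_⟩
  · exact mul_nonneg (sq_nonneg _) (by linarith [hgap i])
  · exact mul_pos (by positivity) (by linarith [hgap i0])

private lemma dp_sum_left' {n : ℕ} {ι : Type*} (s : Finset ι) (f : ι → (Fin n → ℝ))
    (w : Fin n → ℝ) : (∑ i ∈ s, f i) ⬝ᵥ w = ∑ i ∈ s, f i ⬝ᵥ w := by
  simp [dotProduct, Finset.sum_apply, Finset.sum_mul]
  exact Finset.sum_comm

private lemma dp_sum_right' {n : ℕ} {ι : Type*} (s : Finset ι) (w : Fin n → ℝ)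
    (f : ι → (Fin n → ℝ)) : w ⬝ᵥ (∑ i ∈ s, f i) = ∑ i ∈ s, w ⬝ᵥ f i := by
  simp [dotProduct, Finset.sum_apply, Finset.mul_sum]
  exact Finset.sum_comm

private lemma expand_quad' {n : ℕ} {ι : Type*} [Fintype ι] (M : Matrix (Fin n) (Fin n) ℝ)
    (x : ι → (Fin n → ℝ)) (c : ι → ℝ) :
    (∑ i, c i • x i) ⬝ᵥ (M *ᵥ ∑ j, c j • x j)
      = ∑ i, ∑ j, c i * c j * (x i ⬝ᵥ (M *ᵥ x j)) := by
  rw [dp_sum_left']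
  refine Finset.sum_congr rfl fun i _ => ?_
  rw [show (M *ᵥ ∑ j, c j • x j) = ∑ j, c j • (M *ᵥ x j) by
        rw [← mulVecLin_apply, map_sum]; simp [mulVecLin_apply]]
  rw [dp_sum_right']
  refine Finset.sum_congr rfl fun j _ => ?_
  rw [smul_dotProduct, dotProduct_smul]
  simp [smul_eq_mul]; ring

private lemma eigbasis_dp' {n : ℕ} {M : Matrix (Fin n) (Fin n) ℝ} (hM : M.IsHermitian)
    (i j : Fin n) :
    (⇑(hM.eigenvectorBasis i) ⬝ᵥ ⇑(hM.eigenvectorBasis j)) = if i = j then 1 else 0 := by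
  have h := hM.eigenvectorBasis.orthonormal
  rw [orthonormal_iff_ite] at h
  simpa [PiLp.inner_apply, dotProduct, RCLike.inner_apply, mul_comm] using h i j

private lemma pos_eig_lower_bound' {n k : ℕ} (M : Matrix (Fin n) (Fin n) ℝ)
    (hM : M.IsHermitian) (x : Fin k → (Fin n → ℝ))
    (hx : ∀ c : Fin k → ℝ, c ≠ 0 → 0 < (∑ i, c i • x i) ⬝ᵥ (M *ᵥ ∑ i, c i • x i)) :
    k ≤ posEigCount M hM := by
  classical
  set w : Fin n → (Fin n → ℝ) := fun i => ⇑(hM.eigenvectorBasis i) with hw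
  have hMw : ∀ i, M *ᵥ w i = hM.eigenvalues i • w i := fun i => hM.mulVec_eigenvectorBasis i
  have hdp : ∀ i j, w i ⬝ᵥ w j = if i = j then 1 else 0 := eigbasis_dp' hM
  set V : Submodule ℝ (Fin n → ℝ) := Submodule.span ℝ (Set.range x) with hV
  set P : Submodule ℝ (Fin n → ℝ) :=
    Submodule.span ℝ (Set.range (fun i : {i : Fin n // ¬ 0 < hM.eigenvalues i} => w i.1)) with hP
  have hPneg : ∀ z ∈ P, z ⬝ᵥ (M *ᵥ z) ≤ 0 := by
    intro z hz
    rw [hP, Submodule.mem_span_range_iff_exists_fun] at hz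
    obtain ⟨c, hc⟩ := hz
    rw [← hc, expand_quad']
    have hterm : ∀ i j : {i : Fin n // ¬ 0 < hM.eigenvalues i},
        c i * c j * (w i.1 ⬝ᵥ (M *ᵥ w j.1))
          = c i * c j * hM.eigenvalues j.1 * (if i.1 = j.1 then 1 else 0) := by
      intro i j
      rw [hMw, dotProduct_smul, hdp]
      simp only [smul_eq_mul]; ring
    rw [Finset.sum_congr rfl fun i _ => Finset.sum_congr rfl fun j _ => hterm i j]
    apply Finset.sum_nonpos
    intro i _
    rw [Finset.sum_eq_single i]
    · have h1 : hM.eigenvalues i.1 ≤ 0 := le_of_not_gt i.2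
      have h2 : 0 ≤ c i * c i := mul_self_nonneg _
      simp only [eq_self_iff_true, if_true, ite_true, mul_one]
      nlinarith
    · intro j _ hji
      rw [if_neg (fun h => hji (Subtype.ext h.symm)), mul_zero]
    · intro h; exact absurd (Finset.mem_univ i) h
  have hVdim : Module.finrank ℝ V = k := by
    have hli : LinearIndependent ℝ x := by
      rw [linearIndependent_iff']
      intro s c hsum i hi
      by_contra hne
      have hc : (fun j => if j ∈ s then c j else 0) ≠ 0 := by
        intro h0
        apply hne
        have := congrFun h0 i
        simpa [hi] using this
      have hpos := hx _ hc
      have hz : (∑ j, (if j ∈ s then c j else 0) • x j) = ∑ j ∈ s, c j • x j := by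
        simp only [ite_smul, zero_smul]
        rw [← Finset.sum_filter, Finset.filter_mem_eq_inter, Finset.univ_inter]
      rw [hz, hsum] at hpos
      simp at hpos
    rw [hV, finrank_span_eq_card hli, Fintype.card_fin]
  have hPdim : Module.finrank ℝ P = Fintype.card {i : Fin n // ¬ 0 < hM.eigenvalues i} := by
    have hli : LinearIndependent ℝ (fun i : {i : Fin n // ¬ 0 < hM.eigenvalues i} => w i.1) := by
      rw [linearIndependent_iff']
      intro s c hsum i hi
      have hdot := congrArg (fun z => w i.1 ⬝ᵥ z) hsum
      rw [dp_sum_right'] at hdot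
      have h2 : ∀ j ∈ s, w i.1 ⬝ᵥ (c j • w j.1) = if j = i then c j else 0 := by
        intro j _
        rw [dotProduct_smul, hdp]
        by_cases h : j = i
        · simp [h]
        · rw [if_neg (fun he => h (Subtype.ext he.symm)), if_neg h]; simp
      rw [Finset.sum_congr rfl h2, Finset.sum_ite_eq' s i c, if_pos hi] at hdot
      simpa using hdot
    rw [hP, finrank_span_eq_card hli]
  have hdisj : V ⊓ P = ⊥ := by
    rw [Submodule.eq_bot_iff]
    intro z hz
    obtain ⟨hzV, hzP⟩ := Submodule.mem_inf.mp hz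
    rw [hV, Submodule.mem_span_range_iff_exists_fun] at hzV
    obtain ⟨c, hc⟩ := hzV
    by_cases hcz : c = 0
    · rw [← hc, hcz]; simp
    · have h1 := hx c hcz
      rw [hc] at h1
      exact absurd (hPneg z hzP) (not_le.mpr h1)
  have hsum := Submodule.finrank_sup_add_finrank_inf_eq V P
  rw [hdisj] at hsum
  simp only [finrank_bot, add_zero] at hsum
  have hle : Module.finrank ℝ ↥(V ⊔ P) ≤ n := by
    have := Submodule.finrank_le (V ⊔ P)
    simpa [Module.finrank_pi] using this
  have hcard : Fintype.card {i : Fin n // ¬ 0 < hM.eigenvalues i}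
      = n - posEigCount M hM := by
    rw [Fintype.card_subtype]
    have := Finset.card_filter_add_card_filter_not
      (s := (Finset.univ : Finset (Fin n))) (p := fun i => 0 < hM.eigenvalues i)
    simp only [Finset.card_univ, Fintype.card_fin] at this
    unfold posEigCount
    omega
  have hposle : posEigCount M hM ≤ n := by
    unfold posEigCount
    calc _ ≤ (Finset.univ : Finset (Fin n)).card := Finset.card_filter_le _ _
      _ = n := by simp
  rw [hVdim, hPdim, hcard] at hsum
  omega

private lemma modQ_symm' {n : ℕ} (M : Matrix (Fin n) (Fin n) ℝ) (hM : M.IsHermitian)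
    (S T : Finset (Fin n)) : modQ M S T = modQ M T S := by
  have ht : Mᵀ = M := by simpa [Matrix.IsSymm] using hM
  unfold modQ
  rw [dotProduct_mulVec, ← ht, vecMul_transpose, dotProduct_comm, ht]

end AuxLemmas

theorem stmt10 {n k : ℕ} (hk : 1 ≤ k) (A W M : Matrix (Fin n) (Fin n) ℝ)
    (hA : A.IsHermitian) (hApos : ∀ i j, 0 ≤ A i j) (hAirr : A.Irreducible)
    (hW : W.IsDiag) (v : Fin n → ℝ) (hv : v ≠ 0) (hvpos : ∀ i, 0 ≤ v i)
    (σ : ℝ) (hσ : 0 < σ)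
    (hMdef : M = A + W - σ • vecMulVec v v) (hM : M.IsHermitian)
    (S : Fin k → Finset (Fin n)) (hSne : ∀ i, (S i).Nonempty)
    (hSdisj : ∀ i j, i ≠ j → Disjoint (S i) (S j))
    (hQpos : ∀ i, 0 < modQ M (S i) (S i))
    (hQneg : ∀ i j, i ≠ j → modQ M (S i) (S j) < 0)
    (α : Fin k → ℝ) (hα : ∀ i, 0 < α i)
    (hdom : ∀ i, (∑ j ∈ Finset.univ.erase i, α j * |modQ M (S i) (S j)|) <
      α i * modQ M (S i) (S i)) :
    k ≤ posEigCount M hM := by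
  apply pos_eig_lower_bound' M hM (fun i => charVec (S i))
  intro c hc
  rw [expand_quad']
  exact dd_pos' (fun i j => modQ M (S i) (S j))
    (fun i j => modQ_symm' M hM (S i) (S j)) α hα hdom c hc
end

section
/- Let M be an n×n generalized modularity matrix satisfying M·𝟙 = 0, where 𝟙 is the all-ones vector, and let {S₁,…,S_p} be a partition of {1,…,n} into pairwise disjoint nonempty subsets such that Q(S_i) > 0 for all i and Q(S_i, S_j) < 0 for all i ≠ j. Then M has at least p−1 positive eigenvalues (counted with multiplicity). -/
open Matrix BigOperators

/-! ### Auxiliary material -/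

open RealInnerProductSpace

section Aux

variable {n m p : ℕ}

lemma dot_sum_right (x : Fin n → ℝ) (g : Fin m → Fin n → ℝ) :
    x ⬝ᵥ (∑ j, g j) = ∑ j, x ⬝ᵥ g j := by
  simp only [dotProduct, Finset.sum_apply, Finset.mul_sum]
  exact Finset.sum_comm

lemma sum_dot_left (x : Fin n → ℝ) (g : Fin m → Fin n → ℝ) :
    (∑ j, g j) ⬝ᵥ x = ∑ j, g j ⬝ᵥ x := by
  simp only [dotProduct, Finset.sum_apply, Finset.sum_mul]
  exact Finset.sum_comm

lemma mulVec_sum' (M : Matrix (Fin n) (Fin n) ℝ) (g : Fin m → Fin n → ℝ) :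
    M *ᵥ (∑ j, g j) = ∑ j, M *ᵥ g j := by
  rw [show (M *ᵥ ∑ j, g j) = M.mulVecLin (∑ j, g j) from rfl, map_sum]
  rfl

/-- The sum `∑ i, c i • 𝟙_{S i}`. -/
noncomputable def chSum (S : Fin p → Finset (Fin n)) (c : Fin p → ℝ) : Fin n → ℝ :=
  ∑ i, c i • charVec (S i)

/-- `chSum` as a linear map into Euclidean space. -/
noncomputable def Lmap (S : Fin p → Finset (Fin n)) :
    (Fin p → ℝ) →ₗ[ℝ] EuclideanSpace ℝ (Fin n) where
  toFun c := WithLp.toLp 2 (chSum S c)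
  map_add' c d := by
    unfold chSum
    rw [← WithLp.toLp_add]; congr 1
    show (∑ i, (c i + d i) • charVec (S i)) = (∑ i, c i • charVec (S i)) + ∑ i, d i • charVec (S i)
    simp [add_smul, Finset.sum_add_distrib]
  map_smul' a c := by
    unfold chSum
    rw [← WithLp.toLp_smul]; congr 1
    show (∑ i, (a * c i) • charVec (S i)) = a • ∑ i, c i • charVec (S i)
    simp [smul_smul, Finset.smul_sum]

/-- The sum-of-coordinates functional. -/
noncomputable def sumFun (p : ℕ) : (Fin p → ℝ) →ₗ[ℝ] ℝ where
  toFun c := ∑ i, c i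
  map_add' c d := Finset.sum_add_distrib
  map_smul' a c := by simp [Finset.mul_sum]

lemma neg_part_q (M : Matrix (Fin n) (Fin n) ℝ) (hM : M.IsHermitian)
    (x : EuclideanSpace ℝ (Fin n))
    (hx : x ∈ Submodule.span ℝ (Set.range fun i : {i : Fin n // ¬ 0 < hM.eigenvalues i} =>
      hM.eigenvectorBasis i.1)) :
    (x : Fin n → ℝ) ⬝ᵥ (M *ᵥ (x : Fin n → ℝ)) ≤ 0 := by
  classical
  set b := hM.eigenvectorBasis with hb
  set ev := hM.eigenvalues with hev
  have hdotinner : ∀ y z : EuclideanSpace ℝ (Fin n), (y : Fin n → ℝ) ⬝ᵥ (z : Fin n → ℝ) = ⟪y, z⟫ := by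
    intro y z
    rw [EuclideanSpace.inner_eq_star_dotProduct]
    rw [dotProduct_comm]; simp
  have hcoef : ∀ j, 0 < ev j → ⟪b j, x⟫ = 0 := by
    intro j hj
    refine Submodule.span_induction (p := fun y _ => ⟪b j, y⟫ = 0) ?_ ?_ ?_ ?_ hx
    · rintro y ⟨i, rfl⟩
      exact b.orthonormal.2 (fun h : j = i.1 => i.2 (h ▸ hj))
    · exact inner_zero_right _
    · intro y z _ _ hy hz
      rw [inner_add_right, hy, hz, add_zero]
    · intro a y _ hy
      rw [real_inner_smul_right, hy, mul_zero]
  have hrepr : (x : Fin n → ℝ) = ∑ j, (⟪b j, x⟫ : ℝ) • (b j : Fin n → ℝ) := by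
    have := congrArg WithLp.ofLp (b.sum_repr' x).symm
    rw [this, WithLp.ofLp_sum]; rfl
  have heig : ∀ j, M *ᵥ (b j : Fin n → ℝ) = ev j • (b j : Fin n → ℝ) := fun j =>
    hM.mulVec_eigenvectorBasis j
  have hq : (x : Fin n → ℝ) ⬝ᵥ (M *ᵥ (x : Fin n → ℝ))
      = ∑ j, ev j * (⟪b j, x⟫ : ℝ) ^ 2 := by
    rw [show (M *ᵥ (x : Fin n → ℝ))
        = M.mulVecLin (∑ j, (⟪b j, x⟫ : ℝ) • (b j : Fin n → ℝ)) from by rw [← hrepr]; rfl,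
      map_sum]
    simp only [_root_.map_smul, Matrix.mulVecLin_apply]
    rw [dot_sum_right]
    refine Finset.sum_congr rfl fun j _ => ?_
    rw [dotProduct_smul, heig j, dotProduct_smul]
    rw [hdotinner x (b j), real_inner_comm]
    rw [smul_eq_mul, smul_eq_mul]
    ring
  rw [hq]
  refine Finset.sum_nonpos fun j _ => ?_
  by_cases hj : 0 < ev j
  · rw [hcoef j hj]
    simp
  · have h1 : ev j ≤ 0 := le_of_not_gt hj
    have h2 : (0:ℝ) ≤ (⟪b j, x⟫ : ℝ) ^ 2 := sq_nonneg _
    exact mul_nonpos_of_nonpos_of_nonneg h1 h2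

end Aux

theorem stmt11 {n p : ℕ} (hp : 1 ≤ p) (A W M : Matrix (Fin n) (Fin n) ℝ)
    (hA : A.IsHermitian) (hApos : ∀ i j, 0 ≤ A i j) (hAirr : A.Irreducible)
    (hW : W.IsDiag) (v : Fin n → ℝ) (hv : v ≠ 0) (hvpos : ∀ i, 0 ≤ v i)
    (σ : ℝ) (hσ : 0 < σ)
    (hMdef : M = A + W - σ • vecMulVec v v) (hM : M.IsHermitian)
    (hMone : M *ᵥ (fun _ => (1 : ℝ)) = 0)
    (S : Fin p → Finset (Fin n)) (hSne : ∀ i, (S i).Nonempty)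
    (hSdisj : ∀ i j, i ≠ j → Disjoint (S i) (S j))
    (hScover : ∀ x : Fin n, ∃ i, x ∈ S i)
    (hQpos : ∀ i, 0 < modQ M (S i) (S i))
    (hQneg : ∀ i j, i ≠ j → modQ M (S i) (S j) < 0) :
    p - 1 ≤ posEigCount M hM := by
  classical
  -- symmetry of M and of the associated bilinear form
  have hsym : ∀ i j, M i j = M j i := by
    intro i j
    conv_lhs => rw [← hM]
    simp [Matrix.conjTranspose_apply]
  have hbil : ∀ x y : Fin n → ℝ, x ⬝ᵥ (M *ᵥ y) = y ⬝ᵥ (M *ᵥ x) := by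
    intro x y
    simp only [dotProduct, Matrix.mulVec, dotProduct, Finset.mul_sum]
    rw [Finset.sum_comm]
    refine Finset.sum_congr rfl fun i _ => Finset.sum_congr rfl fun j _ => ?_
    rw [hsym j i]; ring
  -- the characteristic vectors sum to the all-ones vector
  have hones : (∑ j, charVec (S j)) = (fun _ => (1:ℝ)) := by
    funext x
    obtain ⟨j₀, hj₀⟩ := hScover x
    rw [Finset.sum_apply, Finset.sum_eq_single j₀]
    · simp [charVec, hj₀]
    · intro j _ hne
      have hx : x ∉ S j := fun h => (Finset.disjoint_left.mp (hSdisj j j₀ hne) h) hj₀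
      simp [charVec, hx]
    · simp
  -- row sums of the modularity matrix of the partition vanish
  have hrow : ∀ i, ∑ j, modQ M (S i) (S j) = 0 := by
    intro i
    have h1 : ∑ j, modQ M (S i) (S j) = charVec (S i) ⬝ᵥ (M *ᵥ ∑ j, charVec (S j)) := by
      rw [mulVec_sum', dot_sum_right]
      rfl
    rw [h1, hones, hMone, dotProduct_zero]
  have hQsym : ∀ i j, modQ M (S i) (S j) = modQ M (S j) (S i) := fun i j => hbil _ _
  have hcol : ∀ j, ∑ i, modQ M (S i) (S j) = 0 := by
    intro j
    calc ∑ i, modQ M (S i) (S j) = ∑ i, modQ M (S j) (S i) :=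
          Finset.sum_congr rfl fun i _ => hQsym i j
      _ = 0 := hrow j
  -- evaluation of chSum on a member of a part
  have hval : ∀ (c : Fin p → ℝ) (i : Fin p) (x : Fin n), x ∈ S i → chSum S c x = c i := by
    intro c i x hx
    unfold chSum
    rw [Finset.sum_apply, Finset.sum_eq_single i]
    · simp [charVec, hx]
    · intro j _ hne
      have h : x ∉ S j := fun h => (Finset.disjoint_left.mp (hSdisj j i hne) h) hx
      simp [charVec, h]
    · simp
  -- quadratic form of chSum
  have hqL : ∀ c : Fin p → ℝ,
      chSum S c ⬝ᵥ (M *ᵥ chSum S c) = ∑ i, ∑ j, c i * c j * modQ M (S i) (S j) := by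
    intro c
    unfold chSum
    rw [show (M *ᵥ ∑ j, c j • charVec (S j)) = M.mulVecLin (∑ j, c j • charVec (S j)) from rfl,
      map_sum]
    simp only [_root_.map_smul, Matrix.mulVecLin_apply]
    rw [sum_dot_left]
    refine Finset.sum_congr rfl fun i _ => ?_
    rw [smul_dotProduct, dot_sum_right, Finset.smul_sum]
    refine Finset.sum_congr rfl fun j _ => ?_
    rw [dotProduct_smul]
    show c i • (c j • (charVec (S i) ⬝ᵥ (M *ᵥ charVec (S j)))) = _
    rw [smul_eq_mul, smul_eq_mul, modQ]
    ring
  -- positivity of the quadratic form on mean-zero coefficient vectors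
  have hposQ : ∀ c : Fin p → ℝ, (∑ i, c i) = 0 → c ≠ 0 →
      0 < ∑ i, ∑ j, c i * c j * modQ M (S i) (S j) := by
    intro c hsum hc
    have e1 : ∑ i, ∑ j, modQ M (S i) (S j) * (c i)^2 = 0 := by
      refine Finset.sum_eq_zero fun i _ => ?_
      rw [← Finset.sum_mul, hrow i, zero_mul]
    have e2 : ∑ i, ∑ j, modQ M (S i) (S j) * (c j)^2 = 0 := by
      rw [Finset.sum_comm]
      refine Finset.sum_eq_zero fun j _ => ?_
      rw [← Finset.sum_mul, hcol j, zero_mul]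
    have hkey : ∑ i, ∑ j, c i * c j * modQ M (S i) (S j)
        = ∑ i, ∑ j, (-(modQ M (S i) (S j))) * (c i - c j)^2 / 2 := by
      have hterm : ∀ i j, c i * c j * modQ M (S i) (S j)
          = (-(modQ M (S i) (S j))) * (c i - c j)^2 / 2
            + modQ M (S i) (S j) * (c i)^2 / 2 + modQ M (S i) (S j) * (c j)^2 / 2 := by
        intro i j; ring
      simp_rw [hterm, Finset.sum_add_distrib, ← Finset.sum_div, e1, e2]
      simp
    rw [hkey]
    -- find witnesses for strict positivity
    obtain ⟨i₀, hi₀⟩ := Function.ne_iff.mp hc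
    have hex : ∃ j, c j ≠ c i₀ := by
      by_contra h
      push_neg at h
      have : ∑ i, c i = (p : ℝ) * c i₀ := by
        rw [Finset.sum_congr rfl fun i _ => h i]
        simp [mul_comm]
      rw [hsum] at this
      have hp0 : (p : ℝ) ≠ 0 := by positivity
      exact hi₀ (by
        have := (mul_eq_zero.mp this.symm).resolve_left hp0
        simpa using this)
    obtain ⟨j₁, hj₁⟩ := hex
    have hne : i₀ ≠ j₁ := fun h => hj₁ (h ▸ rfl)
    have hnonneg : ∀ i j : Fin p, 0 ≤ (-(modQ M (S i) (S j))) * (c i - c j)^2 / 2 := by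
      intro i j
      rcases eq_or_ne i j with h | h
      · subst h; simp
      · have h1 : 0 ≤ -(modQ M (S i) (S j)) := by linarith [hQneg i j h]
        positivity
    refine Finset.sum_pos' (fun i _ => Finset.sum_nonneg fun j _ => hnonneg i j)
      ⟨i₀, Finset.mem_univ _, ?_⟩
    refine Finset.sum_pos' (fun j _ => hnonneg i₀ j) ⟨j₁, Finset.mem_univ _, ?_⟩
    have h1 : 0 < -(modQ M (S i₀) (S j₁)) := by linarith [hQneg i₀ j₁ hne]
    have h2 : c i₀ - c j₁ ≠ 0 := sub_ne_zero.mpr (Ne.symm hj₁)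
    have h3 : 0 < (c i₀ - c j₁)^2 := by
      rw [sq]
      exact mul_self_pos.mpr h2
    positivity
  -- the linear map and its injectivity
  set L : (Fin p → ℝ) →ₗ[ℝ] EuclideanSpace ℝ (Fin n) := Lmap S with hL
  have hLinj : Function.Injective L := by
    rw [injective_iff_map_eq_zero]
    intro c hc
    funext i
    obtain ⟨x, hx⟩ := hSne i
    have h0 : chSum S c x = 0 := by
      have := congrFun (show chSum S c = (0 : Fin n → ℝ) from congrArg WithLp.ofLp hc) x
      simpa using this
    rw [hval c i x hx] at h0
    simpa using h0
  -- submodules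
  set U : Submodule ℝ (Fin p → ℝ) := LinearMap.ker (sumFun p) with hU
  set V : Submodule ℝ (EuclideanSpace ℝ (Fin n)) := U.map L with hV
  set Wneg : Submodule ℝ (EuclideanSpace ℝ (Fin n)) :=
    Submodule.span ℝ (Set.range fun i : {i : Fin n // ¬ 0 < hM.eigenvalues i} =>
      hM.eigenvectorBasis i.1) with hWneg
  -- finrank of U
  have hUrank : Module.finrank ℝ U + 1 = p := by
    have hsurj : LinearMap.range (sumFun p) = ⊤ := by
      rw [LinearMap.range_eq_top]
      intro r
      refine ⟨fun j => if j = ⟨0, hp⟩ then r else 0, ?_⟩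
      show (∑ i, if i = (⟨0, hp⟩ : Fin p) then r else 0) = r
      simp
    have h1 := LinearMap.finrank_range_add_finrank_ker (sumFun p)
    rw [hsurj] at h1
    rw [finrank_top, Module.finrank_self] at h1
    rw [Module.finrank_pi, Fintype.card_fin] at h1
    rw [hU]
    omega
  -- finrank of V
  have hVrank : Module.finrank ℝ V + 1 = p := by
    rw [hV, ← (Submodule.equivMapOfInjective L hLinj U).finrank_eq]
    exact hUrank
  -- finrank of Wneg
  have hWrank : Module.finrank ℝ Wneg
      = (Finset.univ.filter (fun i => ¬ 0 < hM.eigenvalues i)).card := by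
    have hli : LinearIndependent ℝ (fun i : {i : Fin n // ¬ 0 < hM.eigenvalues i} =>
        hM.eigenvectorBasis i.1) :=
      (hM.eigenvectorBasis.orthonormal.linearIndependent).comp _ Subtype.val_injective
    rw [hWneg, finrank_span_eq_card hli]
    exact Fintype.card_subtype _
  -- positive quadratic form on nonzero elements of V
  have hVpos : ∀ x : EuclideanSpace ℝ (Fin n), x ∈ V → x ≠ 0 →
      0 < (x : Fin n → ℝ) ⬝ᵥ (M *ᵥ (x : Fin n → ℝ)) := by
    intro x hx hx0
    obtain ⟨c, hcU, hcx⟩ := hx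
    have hc0 : c ≠ 0 := by
      rintro rfl
      exact hx0 (by rw [← hcx]; exact map_zero L)
    have hsum : ∑ i, c i = 0 := hcU
    have hxc : (x : Fin n → ℝ) = chSum S c := by rw [← hcx]; rfl
    rw [hxc, hqL c]
    exact hposQ c hsum hc0
  -- V and Wneg intersect trivially
  have hbot : V ⊓ Wneg = ⊥ := by
    rw [Submodule.eq_bot_iff]
    rintro x ⟨hxV, hxW⟩
    by_contra hx0
    have h1 := hVpos x hxV hx0
    have h2 := neg_part_q M hM x hxW
    linarith
  -- dimension count
  have hdim := Submodule.finrank_sup_add_finrank_inf_eq V Wneg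
  rw [hbot, finrank_bot, add_zero] at hdim
  have hle : Module.finrank ℝ ↥(V ⊔ Wneg) ≤ n := by
    calc Module.finrank ℝ ↥(V ⊔ Wneg) ≤ Module.finrank ℝ (EuclideanSpace ℝ (Fin n)) :=
          Submodule.finrank_le _
      _ = n := finrank_euclideanSpace_fin
  have hcount : (Finset.univ.filter (fun i => 0 < hM.eigenvalues i)).card
      + (Finset.univ.filter (fun i => ¬ 0 < hM.eigenvalues i)).card = n := by
    rw [Finset.card_filter_add_card_filter_not]
    simp
  rw [posEigCount]
  omega
end

section
/- Let M = A + W − σ·v·vᵀ be an n×n generalized modularity matrix and let S₁,…,S_k (k ≥ 1) be pairwise disjoint nonempty subsets of {1,…,n} such that for every i, 𝟙_{S_i}ᵀ A 𝟙_{S_i} + 𝟙_{S_i}ᵀ W 𝟙_{S_i} > Σ_{j≠i} 𝟙_{S_i}ᵀ A 𝟙_{S_j}. Then M has at least k−1 positive eigenvalues (counted with multiplicity). -/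
open Matrix BigOperators

/-! ### Auxiliary lemmas -/

lemma dotProduct_finsum {n : ℕ} (x : Fin n → ℝ) {ι : Type*} (s : Finset ι) (f : ι → Fin n → ℝ) :
    x ⬝ᵥ (∑ i ∈ s, f i) = ∑ i ∈ s, x ⬝ᵥ f i := by
  simp [dotProduct, Finset.mul_sum, Finset.sum_apply]
  rw [Finset.sum_comm]

lemma quadform_eigen_expand {n : ℕ} (M : Matrix (Fin n) (Fin n) ℝ) (hM : M.IsHermitian)
    (x : EuclideanSpace ℝ (Fin n)) :
    (x : Fin n → ℝ) ⬝ᵥ (M *ᵥ x) = ∑ i, hM.eigenvalues i * (hM.eigenvectorBasis.repr x i)^2 := by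
  set b := hM.eigenvectorBasis with hb
  have hrepr : ∀ i, (x : Fin n → ℝ) ⬝ᵥ (b i : Fin n → ℝ) = b.repr x i := by
    intro i
    rw [b.repr_apply_apply x i]
    simp [PiLp.inner_apply, dotProduct, mul_comm]
  have hx : (x : Fin n → ℝ) = ∑ i, b.repr x i • (b i : Fin n → ℝ) := by
    have h := b.sum_repr x
    exact (congrArg (fun y : EuclideanSpace ℝ (Fin n) => (y : Fin n → ℝ)) h.symm).trans (by
      rw [WithLp.ofLp_sum]
      rfl)
  conv_lhs => rw [show M *ᵥ x = M *ᵥ (∑ i, b.repr x i • (b i : Fin n → ℝ)) by rw [← hx]]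
  rw [← M.mulVecLin_apply, map_sum, dotProduct_finsum]
  refine Finset.sum_congr rfl fun i _ => ?_
  have hMb : M *ᵥ (b i : Fin n → ℝ) = hM.eigenvalues i • (b i : Fin n → ℝ) :=
    hM.mulVec_eigenvectorBasis i
  rw [M.mulVecLin_apply, Matrix.mulVec_smul, hMb,
    dotProduct_smul, smul_eq_mul, dotProduct_smul, smul_eq_mul, hrepr i]
  ring

lemma posEig_ge_of_pos_subspace {n : ℕ} (M : Matrix (Fin n) (Fin n) ℝ) (hM : M.IsHermitian)
    (V : Submodule ℝ (EuclideanSpace ℝ (Fin n)))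
    (hV : ∀ x ∈ V, x ≠ 0 → 0 < (x : Fin n → ℝ) ⬝ᵥ (M *ᵥ x)) :
    Module.finrank ℝ V ≤ posEigCount M hM := by
  by_contra hlt
  push_neg at hlt
  set b := hM.eigenvectorBasis with hb
  set P := Finset.univ.filter (fun i => 0 < hM.eigenvalues i) with hP
  have hPcount : posEigCount M hM = P.card := rfl
  let L : EuclideanSpace ℝ (Fin n) →ₗ[ℝ] (↥P → ℝ) :=
    { toFun := fun x => fun i => b.repr x i
      map_add' := by intros; ext i; simp
      map_smul' := by intros; ext i; simp }
  set E := LinearMap.ker L with hE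
  have hEneg : ∀ x ∈ E, (x : Fin n → ℝ) ⬝ᵥ (M *ᵥ x) ≤ 0 := by
    intro x hx
    rw [quadform_eigen_expand M hM x]
    apply Finset.sum_nonpos
    intro i _
    by_cases hi : 0 < hM.eigenvalues i
    · have hz : b.repr x i = 0 := by
        have := LinearMap.mem_ker.mp hx
        exact congrFun this ⟨i, by simp [hP, hi]⟩
      rw [← hb, hz]; simp
    · push_neg at hi
      exact mul_nonpos_of_nonpos_of_nonneg hi (sq_nonneg _)
  have hrn : Module.finrank ℝ (LinearMap.range L) + Module.finrank ℝ E =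
      Module.finrank ℝ (EuclideanSpace ℝ (Fin n)) := LinearMap.finrank_range_add_finrank_ker L
  have htot : Module.finrank ℝ (EuclideanSpace ℝ (Fin n)) = n := by
    simp [finrank_euclideanSpace]
  have hrange : Module.finrank ℝ (LinearMap.range L) ≤ P.card := by
    have := (LinearMap.range L).finrank_le
    simpa [Module.finrank_pi] using this
  have hEdim : n - P.card ≤ Module.finrank ℝ E := by omega
  have hsum := Submodule.finrank_sup_add_finrank_inf_eq V E
  have hsup : Module.finrank ℝ ↥(V ⊔ E) ≤ n := by
    have := (V ⊔ E).finrank_le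
    omega
  have hPn : P.card ≤ n := by
    have := Finset.card_filter_le Finset.univ (fun i => 0 < hM.eigenvalues i)
    simpa using this
  have hinf : 0 < Module.finrank ℝ ↥(V ⊓ E) := by omega
  obtain ⟨x, hxne⟩ := Module.finrank_pos_iff_exists_ne_zero.mp hinf
  have hxV : (x : EuclideanSpace ℝ (Fin n)) ∈ V := (Submodule.mem_inf.mp x.2).1
  have hxE : (x : EuclideanSpace ℝ (Fin n)) ∈ E := (Submodule.mem_inf.mp x.2).2
  have hxne' : (x : EuclideanSpace ℝ (Fin n)) ≠ 0 := by
    simpa [Submodule.coe_eq_zero] using hxne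
  exact absurd (hV _ hxV hxne') (not_lt.mpr (hEneg _ hxE))

lemma sum_erase_swap {k : ℕ} (f : Fin k → Fin k → ℝ) :
    ∑ i, ∑ j ∈ Finset.univ.erase i, f i j = ∑ j, ∑ i ∈ Finset.univ.erase j, f i j := by
  refine Finset.sum_comm' ?_
  intro x y
  simp only [Finset.mem_univ, Finset.mem_erase, true_and, and_true]
  exact ⟨fun h => h.symm, fun h => h.symm⟩

lemma diag_dom_quadform_pos {k : ℕ} (N : Matrix (Fin k) (Fin k) ℝ)
    (hsymm : ∀ i j, N i j = N j i) (hoff : ∀ i j, i ≠ j → 0 ≤ N i j)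
    (hdom : ∀ i, (∑ j ∈ Finset.univ.erase i, N i j) < N i i)
    (c : Fin k → ℝ) (hc : c ≠ 0) : 0 < ∑ i, ∑ j, c i * c j * N i j := by
  have hswap : ∑ i, ∑ j ∈ Finset.univ.erase i, (c j ^ 2 / 2) * N i j
      = ∑ i, ∑ j ∈ Finset.univ.erase i, (c i ^ 2 / 2) * N i j := by
    rw [sum_erase_swap (fun i j => (c j ^2 / 2) * N i j)]
    exact Finset.sum_congr rfl fun j _ => Finset.sum_congr rfl fun i _ => by rw [hsymm]
  have key : ∑ i, ∑ j, c i * c j * N i j =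
      (∑ i, c i ^ 2 * (N i i - ∑ j ∈ Finset.univ.erase i, N i j)) +
      ∑ i, ∑ j ∈ Finset.univ.erase i, ((c i + c j)^2 / 2) * N i j := by
    have hsplit : ∀ i, ∑ j, c i * c j * N i j =
        c i * c i * N i i + ∑ j ∈ Finset.univ.erase i, c i * c j * N i j := fun i =>
      (Finset.add_sum_erase _ _ (Finset.mem_univ i)).symm
    have expand : ∀ i, ∑ j ∈ Finset.univ.erase i, ((c i + c j)^2 / 2) * N i j =
        (∑ j ∈ Finset.univ.erase i, (c i ^2/2) * N i j) +
        (∑ j ∈ Finset.univ.erase i, (c i * c j) * N i j) +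
        (∑ j ∈ Finset.univ.erase i, (c j ^2/2) * N i j) := by
      intro i
      rw [← Finset.sum_add_distrib, ← Finset.sum_add_distrib]
      exact Finset.sum_congr rfl fun j _ => by ring
    simp only [hsplit, expand]
    rw [Finset.sum_add_distrib, Finset.sum_add_distrib, Finset.sum_add_distrib, hswap]
    have hD : ∑ i, c i ^ 2 * (N i i - ∑ j ∈ Finset.univ.erase i, N i j)
        = (∑ i, c i * c i * N i i)
          - 2 * ∑ i, ∑ j ∈ Finset.univ.erase i, (c i ^2/2) * N i j := by
      rw [Finset.mul_sum, ← Finset.sum_sub_distrib]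
      refine Finset.sum_congr rfl fun i _ => ?_
      have h3 : (2:ℝ) * ∑ j ∈ Finset.univ.erase i, (c i ^2/2) * N i j
          = c i ^2 * ∑ j ∈ Finset.univ.erase i, N i j := by
        rw [Finset.mul_sum, Finset.mul_sum]
        exact Finset.sum_congr rfl fun j _ => by ring
      rw [h3]
      ring
    rw [hD]
    ring
  rw [key]
  have h1 : 0 < ∑ i, c i ^ 2 * (N i i - ∑ j ∈ Finset.univ.erase i, N i j) := by
    obtain ⟨i0, hi0⟩ : ∃ i, c i ≠ 0 := by
      by_contra h; push_neg at h; exact hc (funext h)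
    refine Finset.sum_pos' (fun i _ => ?_) ⟨i0, Finset.mem_univ i0, ?_⟩
    · exact mul_nonneg (sq_nonneg _) (le_of_lt (sub_pos.mpr (hdom i)))
    · exact mul_pos (by positivity) (sub_pos.mpr (hdom i0))
  have h2 : 0 ≤ ∑ i, ∑ j ∈ Finset.univ.erase i, ((c i + c j)^2 / 2) * N i j := by
    refine Finset.sum_nonneg fun i _ => Finset.sum_nonneg fun j hj => ?_
    have hij : j ≠ i := (Finset.mem_erase.mp hj).1
    exact mul_nonneg (by positivity) (hoff i j (Ne.symm hij))
  linarith

lemma dot_mulVec_symm {n : ℕ} (B : Matrix (Fin n) (Fin n) ℝ) (hB : ∀ i j, B i j = B j i)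
    (x y : Fin n → ℝ) : x ⬝ᵥ (B *ᵥ y) = y ⬝ᵥ (B *ᵥ x) := by
  simp only [dotProduct, mulVec, Finset.mul_sum]
  rw [Finset.sum_comm]
  exact Finset.sum_congr rfl fun a _ => Finset.sum_congr rfl fun b _ => by rw [hB a b]; ring

lemma dotW_zero {n : ℕ} (W : Matrix (Fin n) (Fin n) ℝ) (hW : W.IsDiag)
    (T T' : Finset (Fin n)) (hTT : Disjoint T T') :
    charVec T ⬝ᵥ (W *ᵥ charVec T') = 0 := by
  apply Finset.sum_eq_zero
  intro a _
  by_cases haT : a ∈ T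
  · have haT' : a ∉ T' := Finset.disjoint_left.mp hTT haT
    have h0 : (W *ᵥ charVec T') a = 0 := by
      show ∑ b, W a b * charVec T' b = 0
      apply Finset.sum_eq_zero
      intro b _
      by_cases hab : a = b
      · subst hab; simp [charVec, haT']
      · simp [hW hab]
    rw [h0, mul_zero]
  · simp [charVec, haT]

lemma dotA_nonneg {n : ℕ} (A : Matrix (Fin n) (Fin n) ℝ) (hApos : ∀ i j, 0 ≤ A i j)
    (T T' : Finset (Fin n)) : 0 ≤ charVec T ⬝ᵥ (A *ᵥ charVec T') := by
  refine Finset.sum_nonneg fun a _ => mul_nonneg ?_ ?_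
  · simp only [charVec]; positivity
  · show 0 ≤ ∑ b, A a b * charVec T' b
    refine Finset.sum_nonneg fun b _ => mul_nonneg (hApos a b) ?_
    simp only [charVec]; positivity

theorem stmt12 {n k : ℕ} (hk : 1 ≤ k) (A W M : Matrix (Fin n) (Fin n) ℝ)
    (hA : A.IsHermitian) (hApos : ∀ i j, 0 ≤ A i j) (hAirr : A.Irreducible)
    (hW : W.IsDiag) (v : Fin n → ℝ) (hv : v ≠ 0) (hvpos : ∀ i, 0 ≤ v i)
    (σ : ℝ) (hσ : 0 < σ)
    (hMdef : M = A + W - σ • vecMulVec v v) (hM : M.IsHermitian)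
    (S : Fin k → Finset (Fin n)) (hSne : ∀ i, (S i).Nonempty)
    (hSdisj : ∀ i j, i ≠ j → Disjoint (S i) (S j))
    (hdom : ∀ i,
      (∑ j ∈ Finset.univ.erase i, charVec (S i) ⬝ᵥ (A *ᵥ charVec (S j))) <
        charVec (S i) ⬝ᵥ (A *ᵥ charVec (S i)) +
        charVec (S i) ⬝ᵥ (W *ᵥ charVec (S i))) :
    k - 1 ≤ posEigCount M hM := by
  classical
  -- the matrix B = A + W and the Gram-like matrix N
  set B := A + W with hB
  have hBsymm : ∀ i j, B i j = B j i := by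
    intro i j
    by_cases hij : i = j
    · rw [hij]
    · have hAij : A i j = A j i := by
        have := congrFun (congrFun hA i) j
        simpa [conjTranspose_apply] using this.symm
      simp [hB, hAij, hW hij, hW (Ne.symm hij)]
  set N : Matrix (Fin k) (Fin k) ℝ :=
    Matrix.of (fun i j => charVec (S i) ⬝ᵥ (B *ᵥ charVec (S j))) with hN
  have hNsymm : ∀ i j, N i j = N j i := fun i j =>
    dot_mulVec_symm B hBsymm (charVec (S i)) (charVec (S j))
  have hNoff : ∀ i j, i ≠ j → 0 ≤ N i j := by
    intro i j hij
    have hWz := dotW_zero W hW (S i) (S j) (hSdisj i j hij)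
    have : N i j = charVec (S i) ⬝ᵥ (A *ᵥ charVec (S j)) := by
      simp only [hN, Matrix.of_apply, hB, add_mulVec, dotProduct_add, hWz, add_zero]
    rw [this]
    exact dotA_nonneg A hApos (S i) (S j)
  have hNdom : ∀ i, (∑ j ∈ Finset.univ.erase i, N i j) < N i i := by
    intro i
    have hdiag : N i i = charVec (S i) ⬝ᵥ (A *ᵥ charVec (S i)) +
        charVec (S i) ⬝ᵥ (W *ᵥ charVec (S i)) := by
      simp only [hN, Matrix.of_apply, hB, add_mulVec, dotProduct_add]
    have hsum : ∑ j ∈ Finset.univ.erase i, N i j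
        = ∑ j ∈ Finset.univ.erase i, charVec (S i) ⬝ᵥ (A *ᵥ charVec (S j)) := by
      refine Finset.sum_congr rfl fun j hj => ?_
      have hij : i ≠ j := (Finset.mem_erase.mp hj).1.symm
      have hWz := dotW_zero W hW (S i) (S j) (hSdisj i j hij)
      simp only [hN, Matrix.of_apply, hB, add_mulVec, dotProduct_add, hWz, add_zero]
    rw [hdiag, hsum]
    exact hdom i
  -- the characteristic vectors as elements of Euclidean space
  let χ : Fin k → EuclideanSpace ℝ (Fin n) := fun i => WithLp.toLp 2 (charVec (S i))
  have hχLI : LinearIndependent ℝ χ := by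
    rw [Fintype.linearIndependent_iff]
    intro c hc i
    obtain ⟨a, ha⟩ := hSne i
    have hc' : ∑ j, c j • (charVec (S j)) = (0 : Fin n → ℝ) := by
      have h := congrArg (WithLp.linearEquiv 2 ℝ (Fin n → ℝ)) hc
      simpa [χ, map_sum, _root_.map_smul] using h
    have h2 : ∑ j, c j * charVec (S j) a = 0 := by
      have h := congrFun hc' a
      simpa [Finset.sum_apply] using h
    rw [Finset.sum_eq_single i] at h2
    · simpa [charVec, ha] using h2
    · intro j _ hji
      have haj : a ∉ S j := fun haj => (Finset.disjoint_left.mp (hSdisj j i hji) haj) ha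
      simp [charVec, haj]
    · intro h; exact absurd (Finset.mem_univ i) h
  have hspanrank : Module.finrank ℝ (Submodule.span ℝ (Set.range χ)) = k := by
    rw [finrank_span_eq_card hχLI]; simp
  -- the linear functional x ↦ v ⬝ᵥ x
  let φ : EuclideanSpace ℝ (Fin n) →ₗ[ℝ] ℝ :=
    { toFun := fun x => v ⬝ᵥ (x : Fin n → ℝ)
      map_add' := fun x y => dotProduct_add v x y
      map_smul' := fun r x => by
        show v ⬝ᵥ (r • (x : Fin n → ℝ)) = r * (v ⬝ᵥ (x : Fin n → ℝ))
        rw [dotProduct_smul, smul_eq_mul] }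
  set Vfull := Submodule.span ℝ (Set.range χ) with hVfull
  set V := Vfull ⊓ LinearMap.ker φ with hVdef
  have hVrank : k - 1 ≤ Module.finrank ℝ V := by
    have hsum := Submodule.finrank_sup_add_finrank_inf_eq Vfull (LinearMap.ker φ)
    have hsup := (Vfull ⊔ LinearMap.ker φ).finrank_le
    have hrn := LinearMap.finrank_range_add_finrank_ker φ
    have hrange : Module.finrank ℝ (LinearMap.range φ) ≤ 1 := by
      have := (LinearMap.range φ).finrank_le
      simpa using this
    have htot : Module.finrank ℝ (EuclideanSpace ℝ (Fin n)) = n := by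
      simp [finrank_euclideanSpace]
    rw [← hVdef] at hsum
    omega
  refine le_trans hVrank (posEig_ge_of_pos_subspace M hM V ?_)
  intro x hx hxne
  obtain ⟨hxfull, hxker⟩ := Submodule.mem_inf.mp hx
  obtain ⟨c, hc⟩ := (Submodule.mem_span_range_iff_exists_fun ℝ).mp hxfull
  have hxfun : (x : Fin n → ℝ) = ∑ i, c i • charVec (S i) := by
    have h := congrArg (WithLp.linearEquiv 2 ℝ (Fin n → ℝ)) hc
    simpa [χ, map_sum, _root_.map_smul] using h.symm
  have hcne : c ≠ 0 := by
    intro h0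
    apply hxne
    have hx0 : (x : Fin n → ℝ) = 0 := by rw [hxfun, h0]; simp
    ext a
    exact congrFun hx0 a
  have hvx : v ⬝ᵥ (x : Fin n → ℝ) = 0 := LinearMap.mem_ker.mp hxker
  have hq : (x : Fin n → ℝ) ⬝ᵥ (M *ᵥ x) = (x : Fin n → ℝ) ⬝ᵥ (B *ᵥ x) := by
    rw [hMdef]
    rw [sub_mulVec, dotProduct_sub, smul_mulVec]
    have hvv : (vecMulVec v v) *ᵥ (x : Fin n → ℝ) = (v ⬝ᵥ (x : Fin n → ℝ)) • v := by
      funext a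
      show ∑ b, vecMulVec v v a b * x b = _
      simp only [vecMulVec_apply, Pi.smul_apply, smul_eq_mul, dotProduct, Finset.sum_mul,
        Finset.mul_sum]
      exact Finset.sum_congr rfl fun b _ => by ring
    rw [hvv, hvx, zero_smul, smul_zero, dotProduct_zero, sub_zero]
  rw [hq]
  have hexp : (x : Fin n → ℝ) ⬝ᵥ (B *ᵥ x) = ∑ i, ∑ j, c i * c j * N i j := by
    conv_lhs => rw [hxfun]
    have hinner : B *ᵥ (∑ j, c j • charVec (S j)) = ∑ j, c j • (B *ᵥ charVec (S j)) := by
      rw [← B.mulVecLin_apply, map_sum]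
      exact Finset.sum_congr rfl fun j _ => by rw [_root_.map_smul, B.mulVecLin_apply]
    rw [hinner, dotProduct_comm, dotProduct_finsum]
    refine Finset.sum_congr rfl fun i _ => ?_
    rw [dotProduct_smul, smul_eq_mul, dotProduct_comm, dotProduct_finsum, Finset.mul_sum]
    refine Finset.sum_congr rfl fun j _ => ?_
    rw [dotProduct_smul, smul_eq_mul]
    show c i * (c j * (charVec (S i) ⬝ᵥ (B *ᵥ charVec (S j)))) = c i * c j * N i j
    rw [hN]
    simp only [Matrix.of_apply]
    ring
  rw [hexp]
  exact diag_dom_quadform_pos N hNsymm hNoff hNdom c hcne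
end

section
/- Let A be an n×n symmetric, entrywise nonnegative, irreducible matrix with Q_NG the Newman–Girvan modularity function of A, let i ≠ j be two indices both belonging to a subset S ⊆ {1,…,n}, let ε > 0, and let A' = A + ε·(e_i e_jᵀ + e_j e_iᵀ) with Newman–Girvan modularity function Q'_NG. Then Q'_NG(S) − Q_NG(S) = 2ε·(vol G − vol S)² / (vol G · (vol G + 2ε)). In particular, if vol S < vol G then Q'_NG(S) > Q_NG(S). -/
open Matrix BigOperators

/-- The degree vector `d = A·𝟙`. -/
noncomputable def degVec {n : ℕ} (A : Matrix (Fin n) (Fin n) ℝ) : Fin n → ℝ :=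
  A *ᵥ (fun _ => 1)

/-- The volume of the graph, `vol G = 𝟙ᵀ d`. -/
noncomputable def volG {n : ℕ} (A : Matrix (Fin n) (Fin n) ℝ) : ℝ :=
  ∑ i, degVec A i

/-- The volume of a vertex subset, `vol S = ∑_{i ∈ S} d_i`. -/
noncomputable def volS {n : ℕ} (A : Matrix (Fin n) (Fin n) ℝ) (S : Finset (Fin n)) : ℝ :=
  ∑ i ∈ S, degVec A i

/-- The Newman–Girvan modularity matrix `M_NG = A - (1 / vol G) · d dᵀ`. -/
noncomputable def ngMatrix {n : ℕ} (A : Matrix (Fin n) (Fin n) ℝ) :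
    Matrix (Fin n) (Fin n) ℝ :=
  A - (volG A)⁻¹ • vecMulVec (degVec A) (degVec A)

/-- The Newman–Girvan modularity function `Q_NG(S) = 𝟙_Sᵀ M_NG 𝟙_S`. -/
noncomputable def ngQ {n : ℕ} (A : Matrix (Fin n) (Fin n) ℝ) (S : Finset (Fin n)) : ℝ :=
  charVec S ⬝ᵥ (ngMatrix A *ᵥ charVec S)


lemma charVec_dot {n : ℕ} (S : Finset (Fin n)) (v : Fin n → ℝ) :
    charVec S ⬝ᵥ v = ∑ a ∈ S, v a := by
  simp [charVec, dotProduct, ite_mul, Finset.sum_ite_mem, Finset.univ_inter]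

lemma mulVec_charVec {n : ℕ} (M : Matrix (Fin n) (Fin n) ℝ) (S : Finset (Fin n)) (a : Fin n) :
    (M *ᵥ charVec S) a = ∑ b ∈ S, M a b := by
  simp [charVec, mulVec, dotProduct, mul_ite, Finset.sum_ite_mem, Finset.univ_inter]

lemma ngQ_eq {n : ℕ} (A : Matrix (Fin n) (Fin n) ℝ) (S : Finset (Fin n)) :
    ngQ A S = (∑ a ∈ S, ∑ b ∈ S, A a b) - (volG A)⁻¹ * (volS A S * volS A S) := by
  simp only [ngQ, charVec_dot, mulVec_charVec, ngMatrix, Matrix.sub_apply, Matrix.smul_apply,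
    vecMulVec_apply, smul_eq_mul, Finset.sum_sub_distrib]
  congr 1
  rw [volS, Finset.sum_mul_sum, Finset.mul_sum]
  exact Finset.sum_congr rfl fun a _ => by rw [Finset.mul_sum]

lemma sum_std {n : ℕ} (S : Finset (Fin n)) (i j : Fin n) (hiS : i ∈ S) (hjS : j ∈ S) (ε : ℝ) :
    ∑ a ∈ S, ∑ b ∈ S, Matrix.single i j ε a b = ε := by
  simp only [Matrix.single, Matrix.of_apply, ite_and]
  rw [Finset.sum_eq_single i]
  · simp [Finset.sum_ite_eq, hjS]
  · intro b _ hbi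
    simp [Ne.symm hbi]
  · intro h; exact absurd hiS h

lemma degVec_add_std {n : ℕ} (A : Matrix (Fin n) (Fin n) ℝ) (i j : Fin n) (ε : ℝ) (a : Fin n) :
    degVec (A + Matrix.single i j ε) a = degVec A a + (if a = i then ε else 0) := by
  simp only [degVec, mulVec, dotProduct, Matrix.add_apply, Matrix.single,
    Matrix.of_apply, ite_and, mul_one, Finset.sum_add_distrib]
  congr 1
  by_cases h : a = i
  · subst h
    simp [Finset.sum_ite_eq]
  · rw [if_neg h, Finset.sum_eq_zero]
    intro b _
    exact if_neg (fun hh => h hh.symm)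

lemma volG_eq {n : ℕ} (A : Matrix (Fin n) (Fin n) ℝ) :
    volG A = ∑ a, ∑ b, A a b := by
  simp [volG, degVec, mulVec, dotProduct]

lemma volG_pos {n : ℕ} (A : Matrix (Fin n) (Fin n) ℝ)
    (hApos : ∀ i j, 0 ≤ A i j) (hAirr : A.Irreducible) (i : Fin n) :
    0 < volG A := by
  obtain ⟨k, hk, hposk⟩ := hAirr i i
  have hex : ∃ p q, 0 < A p q := by
    by_contra h
    push_neg at h
    have hA0 : A = 0 := by
      ext p q
      exact le_antisymm (h p q) (hApos p q)
    rw [hA0, zero_pow hk.ne'] at hposk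
    simp at hposk
  obtain ⟨p, q, hpq⟩ := hex
  rw [volG_eq]
  apply Finset.sum_pos'
  · intro a _
    exact Finset.sum_nonneg fun b _ => hApos a b
  · exact ⟨p, Finset.mem_univ p, Finset.sum_pos'
      (fun b _ => hApos p b) ⟨q, Finset.mem_univ q, hpq⟩⟩

theorem stmt15 {n : ℕ} (A : Matrix (Fin n) (Fin n) ℝ)
    (hA : A.IsHermitian) (hApos : ∀ i j, 0 ≤ A i j) (hAirr : A.Irreducible)
    (S : Finset (Fin n)) (i j : Fin n) (hij : i ≠ j) (hiS : i ∈ S) (hjS : j ∈ S)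
    (ε : ℝ) (hε : 0 < ε)
    (A' : Matrix (Fin n) (Fin n) ℝ)
    (hA' : A' = A + Matrix.single i j ε + Matrix.single j i ε) :
    ngQ A' S - ngQ A S =
      2 * ε * (volG A - volS A S) ^ 2 / (volG A * (volG A + 2 * ε)) ∧
    (volS A S < volG A → ngQ A S < ngQ A' S) := by
  have hv : 0 < volG A := volG_pos A hApos hAirr i
  set v := volG A with hvdef
  set s := volS A S with hsdef
  have hdeg : ∀ a, degVec A' a =
      degVec A a + (if a = i then ε else 0) + (if a = j then ε else 0) := by
    intro a
    rw [hA', degVec_add_std (A + Matrix.single i j ε) j i ε a,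
      degVec_add_std A i j ε a]
  have hvolG' : volG A' = v + 2 * ε := by
    rw [volG]
    simp only [hdeg]
    rw [Finset.sum_add_distrib, Finset.sum_add_distrib]
    simp [Finset.sum_ite_eq, volG, hvdef]
    ring
  have hvolS' : volS A' S = s + 2 * ε := by
    rw [volS]
    simp only [hdeg]
    rw [Finset.sum_add_distrib, Finset.sum_add_distrib]
    simp [Finset.sum_ite_eq, hiS, hjS, volS, hsdef]
    ring
  have hquad : (∑ a ∈ S, ∑ b ∈ S, A' a b) = (∑ a ∈ S, ∑ b ∈ S, A a b) + 2 * ε := by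
    rw [hA']
    simp only [Matrix.add_apply, Finset.sum_add_distrib]
    rw [sum_std S i j hiS hjS ε, sum_std S j i hjS hiS ε]
    ring
  have hQ : ngQ A S = (∑ a ∈ S, ∑ b ∈ S, A a b) - v⁻¹ * (s * s) := ngQ_eq A S
  have hQ' : ngQ A' S = ((∑ a ∈ S, ∑ b ∈ S, A a b) + 2 * ε)
      - (v + 2 * ε)⁻¹ * ((s + 2 * ε) * (s + 2 * ε)) := by
    rw [ngQ_eq A' S, hquad, hvolG', hvolS']
  have hv2 : (0:ℝ) < v + 2 * ε := by linarith
  have hmain : ngQ A' S - ngQ A S = 2 * ε * (v - s) ^ 2 / (v * (v + 2 * ε)) := by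
    rw [hQ, hQ']
    field_simp
    ring
  refine ⟨hmain, fun hlt => ?_⟩
  have hpos : 0 < 2 * ε * (v - s) ^ 2 / (v * (v + 2 * ε)) := by
    apply div_pos
    · exact mul_pos (by linarith) (pow_pos (by linarith) 2)
    · exact mul_pos hv hv2
  linarith [hmain]
end
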